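/- arXiv:2206.14201 — 14 statements merged into one kernel-verified Lean document; each statement's English description precedes it below -/
import Mathlib

section
/- Let p be a prime and define P: ℤ_{p²} × ℤ_{p²} → ℤ_p by P(a + pc, b + pd) = 1 if a + b ≥ p and 0 otherwise, where a, b, c, d ∈ {0,...,p-1}. Then the Gray map φ: ℤ_{p²} → ℤ_p^p satisfies φ(u + v) = φ(u) + φ(v) + φ(p·P(u,v)) for all u, v ∈ ℤ_{p²}, where P(u,v) is lifted to ℤ_{p²} via the natural inclusion {0,...,p-1} ⊂ ℤ_{p²}. -/
/-- The Gray map `φ : ℤ_{p²} → ℤ_p^p`, sending `θ = θ₀·p + θ₁` (with digits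
`0 ≤ θ₀, θ₁ < p`) to the vector whose `i`-th coordinate is `θ₀ + θ₁·i`. -/
def gray (p : ℕ) (θ : ZMod (p ^ 2)) : Fin p → ZMod p :=
  fun i => ((θ.val / p : ℕ) : ZMod p) + ((θ.val % p : ℕ) : ZMod p) * (i.val : ZMod p)

/-- The carry function `P : ℤ_{p²} × ℤ_{p²} → {0,1}`: writing `u = a + p·c`,
`v = b + p·d` with digits in `{0,…,p-1}`, `P(u,v) = 1` iff `a + b ≥ p`. -/
def carry (p : ℕ) (u v : ZMod (p ^ 2)) : ℕ :=
  if p ≤ u.val % p + v.val % p then 1 else 0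

/-- `φ(u + v) = φ(u) + φ(v) + φ(p·P(u,v))` for all `u, v ∈ ℤ_{p²}`. -/
theorem gray_add_carry (p : ℕ) (hp : p.Prime) (u v : ZMod (p ^ 2)) :
    gray p (u + v) = gray p u + gray p v + gray p ((p * carry p u v : ℕ) : ZMod (p ^ 2)) := by
  have hp0 : 0 < p := hp.pos
  haveI : NeZero (p ^ 2) := ⟨by positivity⟩
  haveI : NeZero p := ⟨hp0.ne'⟩
  funext i
  set a := u.val with ha
  set b := v.val with hb
  set c := carry p u v with hc
  -- value of the carry term
  have hc_le : c ≤ 1 := by rw [hc]; unfold carry; split <;> simp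
  have hlt : p * c < p ^ 2 := by nlinarith [hp.two_le]
  have hvalc : ((p * c : ℕ) : ZMod (p ^ 2)).val = p * c := ZMod.val_natCast_of_lt hlt
  have huv : (u + v).val = (a + b) % p ^ 2 := ZMod.val_add u v
  -- carry equals the quotient of the low digits sum
  have hcq : (a % p + b % p) / p = c := by
    rw [hc]; unfold carry
    split
    · next h =>
      rw [← ha, ← hb] at h
      have h1 : a % p < p := Nat.mod_lt _ hp0
      have h2 : b % p < p := Nat.mod_lt _ hp0
      exact Nat.div_eq_of_lt_le (by omega) (by omega)
    · next h =>
      rw [← ha, ← hb] at h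
      exact Nat.div_eq_of_lt (by omega)
  -- quotient of a+b by p
  have hq : (a + b) / p = a / p + b / p + c := by
    conv_lhs => rw [← Nat.div_add_mod a p, ← Nat.div_add_mod b p]
    have : p * (a / p) + a % p + (p * (b / p) + b % p)
        = p * (a / p + b / p) + (a % p + b % p) := by ring
    rw [this, Nat.mul_add_div hp0, hcq]
  -- reduce mod p² quotient
  have hk := Nat.div_add_mod (a + b) (p ^ 2)
  set r := (a + b) % p ^ 2 with hr
  set k := (a + b) / p ^ 2 with hkk
  have hdivr : (a + b) / p = p * k + r / p := by
    conv_lhs => rw [← hk]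
    have : p ^ 2 * k + r = p * (p * k) + r := by ring
    rw [this, Nat.mul_add_div hp0]
  -- low digit identity
  have hmodr : r % p = (a + b) % p := by
    rw [hr, Nat.mod_mod_of_dvd _ (dvd_pow_self p two_ne_zero)]
  -- now prove the coordinate identity in ZMod p
  simp only [gray, Pi.add_apply, huv, ← hr, hvalc]
  have e1 : ((r / p : ℕ) : ZMod p) = ((a / p + b / p + c : ℕ) : ZMod p) := by
    have : ((p * k + r / p : ℕ) : ZMod p) = ((a / p + b / p + c : ℕ) : ZMod p) := by
      rw [← hdivr, hq]
    push_cast at this ⊢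
    simpa using this
  have e2 : ((r % p : ℕ) : ZMod p) = ((a % p : ℕ) : ZMod p) + ((b % p : ℕ) : ZMod p) := by
    rw [hmodr, Nat.add_mod, ZMod.natCast_mod]
    push_cast
    ring
  have e3 : ((p * c / p : ℕ) : ZMod p) = (c : ZMod p) := by
    rw [Nat.mul_div_cancel_left _ hp0]
  have e4 : ((p * c % p : ℕ) : ZMod p) = 0 := by
    rw [Nat.mul_mod_right]; simp
  rw [e1, e2, e3, e4]
  push_cast
  ring
end

section
/- Let p be prime, n a positive integer with gcd(n,p) = 1, and let f, h, g be monic polynomials over ℤ_{p²} with f·h·g = xⁿ - 1. Then in the quotient ring ℤ_{p²}[x]/(xⁿ-1), the ideal generated by fh + pf equals the ideal generated by fh and pfg, i.e., ⟨fh + pf⟩ = ⟨fh, pfg⟩. -/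
open Polynomial

/-- The quotient map `ℤ_{p²}[x] → ℤ_{p²}[x]/(xⁿ - 1)`. -/
noncomputable def Qmk (p n : ℕ) :
    Polynomial (ZMod (p ^ 2)) →+*
      Polynomial (ZMod (p ^ 2)) ⧸ Ideal.span {(X : Polynomial (ZMod (p ^ 2))) ^ n - 1} :=
  Ideal.Quotient.mk _

lemma pdvd_of_cast_eq_zero (p : ℕ) (hp : p.Prime) (x : ZMod (p ^ 2))
    (hx : ZMod.castHom (dvd_pow_self p two_ne_zero) (ZMod p) x = 0) :
    (p : ZMod (p ^ 2)) ∣ x := by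
  haveI : NeZero (p ^ 2) := ⟨pow_ne_zero 2 hp.ne_zero⟩
  have hxv : ((x.val : ℕ) : ZMod (p ^ 2)) = x := ZMod.natCast_zmod_val x
  rw [← hxv, map_natCast] at hx
  obtain ⟨k, hk⟩ := (ZMod.natCast_eq_zero_iff _ _).1 hx
  exact ⟨(k : ZMod (p ^ 2)), by rw [← hxv, hk]; push_cast; ring⟩

lemma coprime_hg (p n : ℕ) (hp : p.Prime) (hn : 0 < n) (hco : Nat.Coprime n p)
    (f h g : Polynomial (ZMod (p ^ 2)))
    (hfac : f * h * g = X ^ n - 1) : IsCoprime h g := by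
  haveI : Fact p.Prime := ⟨hp⟩
  set φ := ZMod.castHom (dvd_pow_self p two_ne_zero) (ZMod p) with hφ
  have hφs : Function.Surjective φ := by
    intro y
    exact ⟨((y.val : ℕ) : ZMod (p ^ 2)), by rw [map_natCast]; exact ZMod.natCast_zmod_val y⟩
  have hsep : ((X : Polynomial (ZMod p)) ^ n - 1).Separable := by
    have hn0 : ((n : ℕ) : ZMod p) ≠ 0 := by
      rw [Ne, ZMod.natCast_eq_zero_iff]
      intro hd
      have h1 : p ∣ 1 := hco ▸ Nat.dvd_gcd hd dvd_rfl
      exact hp.ne_one (Nat.dvd_one.mp h1)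
    simpa using Polynomial.separable_X_pow_sub_C (1 : ZMod p) hn0 one_ne_zero
  have hdvd : (h.map φ) * (g.map φ) ∣ (X : Polynomial (ZMod p)) ^ n - 1 := by
    refine ⟨f.map φ, ?_⟩
    have := congrArg (Polynomial.map φ) hfac
    simp only [Polynomial.map_mul, Polynomial.map_sub, Polynomial.map_pow,
      Polynomial.map_X, Polynomial.map_one] at this
    rw [← this]; ring
  have hcop : IsCoprime (h.map φ) (g.map φ) :=
    Polynomial.Separable.isCoprime (hsep.of_dvd hdvd)
  obtain ⟨a, b, hab⟩ := hcop
  obtain ⟨A, hA⟩ := Polynomial.map_surjective φ hφs a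
  obtain ⟨B, hB⟩ := Polynomial.map_surjective φ hφs b
  have hc : Polynomial.map φ (A * h + B * g - 1) = 0 := by
    simp only [Polynomial.map_add, Polynomial.map_sub, Polynomial.map_mul,
      Polynomial.map_one, hA, hB, hab, sub_self]
  have hCd : C ((p : ℕ) : ZMod (p ^ 2)) ∣ (A * h + B * g - 1) := by
    rw [Polynomial.C_dvd_iff_dvd_coeff]
    intro i
    apply pdvd_of_cast_eq_zero p hp
    rw [← Polynomial.coeff_map, hc, Polynomial.coeff_zero]
  obtain ⟨t, ht⟩ := hCd
  have hp2 : (C ((p : ℕ) : ZMod (p ^ 2))) ^ 2 = 0 := by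
    rw [← map_pow, ← Nat.cast_pow, ZMod.natCast_self, map_zero]
  have key : ((1 - C ((p : ℕ) : ZMod (p ^ 2)) * t) * A) * h
      + ((1 - C ((p : ℕ) : ZMod (p ^ 2)) * t) * B) * g = 1 := by
    have ht' : A * h + B * g = 1 + C ((p : ℕ) : ZMod (p ^ 2)) * t := by
      linear_combination ht
    linear_combination (1 - C ((p : ℕ) : ZMod (p ^ 2)) * t) * ht' - t ^ 2 * hp2
  exact ⟨_, _, key⟩

/-- in `ℤ_{p²}[x]/(xⁿ-1)` with `fhg = xⁿ-1`, `⟨fh + pf⟩ = ⟨fh, pfg⟩`. -/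
theorem span_fh_add_pf (p n : ℕ) (hp : p.Prime) (hn : 0 < n) (hco : Nat.Coprime n p)
    (f h g : Polynomial (ZMod (p ^ 2))) (hf : f.Monic) (hh : h.Monic) (hg : g.Monic)
    (hfac : f * h * g = X ^ n - 1) :
    Ideal.span {Qmk p n (f * h + (p : Polynomial (ZMod (p ^ 2))) * f)}
      = Ideal.span {Qmk p n (f * h), Qmk p n ((p : Polynomial (ZMod (p ^ 2))) * f * g)} := by
  obtain ⟨a, b, hab⟩ := coprime_hg p n hp hn hco f h g hfac
  set P : Polynomial (ZMod (p ^ 2)) := (p : Polynomial (ZMod (p ^ 2))) with hP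
  have hP2 : P ^ 2 = 0 := by
    rw [hP, ← Nat.cast_pow, ← map_natCast (C : ZMod (p^2) →+* Polynomial (ZMod (p^2))),
      ZMod.natCast_self, map_zero]
  have hX0 : Qmk p n ((X : Polynomial (ZMod (p ^ 2))) ^ n - 1) = 0 := by
    exact Ideal.Quotient.eq_zero_iff_mem.2 (Ideal.subset_span rfl)
  have hfhg : Qmk p n (f * h * g) = 0 := by rw [hfac]; exact hX0
  apply le_antisymm
  · rw [Ideal.span_le, Set.singleton_subset_iff]
    rw [SetLike.mem_coe, Ideal.mem_span_pair]
    refine ⟨Qmk p n (1 + P * a), Qmk p n b, ?_⟩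
    rw [← map_mul, ← map_mul, ← map_add]
    congr 1
    linear_combination (P * f) * hab
  · rw [Ideal.span_le]
    rintro x hx
    simp only [Set.mem_insert_iff, Set.mem_singleton_iff] at hx
    rcases hx with rfl | rfl
    · rw [SetLike.mem_coe, Ideal.mem_span_singleton]
      refine ⟨Qmk p n (1 - P * a - b * g), ?_⟩
      have key : f * h = (f * h + P * f) * (1 - P * a - b * g) + b * (f * h * g) := by
        linear_combination (P * f) * hab + (f * a) * hP2
      conv_lhs => rw [key]
      rw [map_add, map_mul, map_mul, hfhg, mul_zero, add_zero]
    · rw [SetLike.mem_coe, Ideal.mem_span_singleton]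
      refine ⟨Qmk p n g, ?_⟩
      rw [← map_mul]
      have : P * f * g = (f * h + P * f) * g - f * h * g := by ring
      rw [this, map_sub, hfhg, sub_zero]
end

section
/- Let p be prime, n coprime to p, and let C₁ = ⟨f h₁ + pf⟩ and C₂ = ⟨f h₂ + pf⟩ be ideals (cyclic codes) in ℤ_{p²}[x]/(xⁿ-1), where f h₁ g₁ = xⁿ - 1 and f h₂ g₂ = xⁿ - 1 with all factors monic. Then C₁ ∩ C₂ = ⟨f·lcm(h₁,h₂), p·f·gcd(g₁,g₂)⟩. -/
open Polynomial

/-! ### Auxiliary lemmas -/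

noncomputable abbrev phi (p : ℕ) : ZMod (p ^ 2) →+* ZMod p :=
  ZMod.castHom (dvd_pow_self p two_ne_zero) (ZMod p)

lemma pmul_eq_zero_iff {p : ℕ} (hp : p.Prime) (r : ZMod (p ^ 2)) :
    (p : ZMod (p ^ 2)) * r = 0 ↔ phi p r = 0 := by
  haveI : NeZero (p ^ 2) := ⟨pow_ne_zero 2 hp.ne_zero⟩
  haveI : NeZero p := ⟨hp.ne_zero⟩
  have hiff : ∀ v : ℕ, ((p ^ 2 ∣ p * v) ↔ p ∣ v) := fun v => by
    rw [pow_two, Nat.mul_dvd_mul_iff_left hp.pos]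
  conv_lhs => rw [← ZMod.natCast_zmod_val r]
  rw [← Nat.cast_mul, ZMod.natCast_eq_zero_iff, hiff _]
  conv_rhs => rw [← ZMod.natCast_zmod_val r]
  rw [map_natCast, ZMod.natCast_eq_zero_iff]

lemma pmul_eq_zero_iff' {p : ℕ} (hp : p.Prime) (r : ZMod (p ^ 2)) :
    (p : ZMod (p ^ 2)) * r = 0 ↔ ∃ s, r = (p : ZMod (p ^ 2)) * s := by
  haveI : NeZero (p ^ 2) := ⟨pow_ne_zero 2 hp.ne_zero⟩
  haveI : NeZero p := ⟨hp.ne_zero⟩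
  constructor
  · intro h
    rw [pmul_eq_zero_iff hp] at h
    conv_lhs at h => rw [← ZMod.natCast_zmod_val r]
    rw [map_natCast, ZMod.natCast_eq_zero_iff] at h
    obtain ⟨t, ht⟩ := h
    exact ⟨t, by rw [← ZMod.natCast_zmod_val r, ht, Nat.cast_mul]⟩
  · rintro ⟨s, rfl⟩
    rw [← mul_assoc, ← Nat.cast_mul, ← pow_two, ZMod.natCast_self, zero_mul]

lemma psq_zero {p : ℕ} : ((p : ZMod (p ^ 2)) * (p : ZMod (p ^ 2))) = 0 := by
  rw [← Nat.cast_mul, ← pow_two, ZMod.natCast_self]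

lemma phi_surj (p : ℕ) : Function.Surjective (Polynomial.map (phi p)) :=
  Polynomial.map_surjective _ (ZMod.ringHom_surjective _)

lemma ker_phi {p : ℕ} (hp : p.Prime) :
    RingHom.ker (phi p) = Ideal.span {(p : ZMod (p ^ 2))} := by
  ext r
  rw [RingHom.mem_ker, Ideal.mem_span_singleton', ← pmul_eq_zero_iff hp,
    pmul_eq_zero_iff' hp]
  constructor
  · rintro ⟨s, rfl⟩; exact ⟨s, mul_comm _ _⟩
  · rintro ⟨s, rfl⟩; exact ⟨s, mul_comm _ _⟩

lemma map_phi_eq_zero_iff {p : ℕ} (hp : p.Prime) (F : Polynomial (ZMod (p ^ 2))) :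
    F.map (phi p) = 0 ↔ ∃ G, F = C (p : ZMod (p ^ 2)) * G := by
  have h1 : F.map (phi p) = 0 ↔ F ∈ RingHom.ker (Polynomial.mapRingHom (phi p)) := by
    rw [RingHom.mem_ker, coe_mapRingHom]
  rw [h1, Polynomial.ker_mapRingHom, ker_phi hp, Ideal.map_span, Set.image_singleton,
    Ideal.mem_span_singleton']
  constructor
  · rintro ⟨G, hG⟩; exact ⟨G, by rw [← hG, mul_comm]⟩
  · rintro ⟨G, rfl⟩; exact ⟨G, mul_comm _ _⟩

lemma Cp_mul_eq_zero_iff {p : ℕ} (hp : p.Prime) (F : Polynomial (ZMod (p ^ 2))) :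
    C (p : ZMod (p ^ 2)) * F = 0 ↔ F.map (phi p) = 0 := by
  simp only [Polynomial.ext_iff, coeff_C_mul, coeff_map, coeff_zero]
  exact forall_congr' fun i => pmul_eq_zero_iff hp _

lemma isCoprime_of_sep {p : ℕ} (hp : p.Prime) {a b : Polynomial (ZMod (p ^ 2))}
    (h : ((a.map (phi p)) * (b.map (phi p))).Separable) : IsCoprime a b := by
  have hcop : IsCoprime (a.map (phi p)) (b.map (phi p)) := h.isCoprime
  obtain ⟨u', v', huv⟩ := hcop
  obtain ⟨u, rfl⟩ := phi_surj p u'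
  obtain ⟨v, rfl⟩ := phi_surj p v'
  set w : Polynomial (ZMod (p ^ 2)) := u * a + v * b - 1 with hw
  have : w.map (phi p) = 0 := by
    simp only [hw, Polynomial.map_sub, Polynomial.map_add, Polynomial.map_mul,
      Polynomial.map_one, huv, sub_self]
  obtain ⟨G, hG⟩ := (map_phi_eq_zero_iff hp w).1 this
  have hww : w * w = 0 := by
    rw [hG, mul_assoc, ← mul_assoc G, mul_comm G, ← mul_assoc, ← mul_assoc, ← C_mul,
      psq_zero, C_0, zero_mul, zero_mul]
  refine ⟨(1 - w) * u, (1 - w) * v, ?_⟩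
  have h1 : u * a + v * b = 1 + w := by rw [hw]; ring
  calc (1 - w) * u * a + (1 - w) * v * b = (1 - w) * (u * a + v * b) := by ring
  _ = (1 - w) * (1 + w) := by rw [h1]
  _ = 1 - w * w := by ring
  _ = 1 := by rw [hww, sub_zero]

lemma fact_nontrivial {p : ℕ} (hp : p.Prime) : (1:ℕ) < p ^ 2 :=
  Nat.one_lt_pow two_ne_zero hp.one_lt

lemma degree_map_le_Cp_mul {p : ℕ} (hp : p.Prime) (α : Polynomial (ZMod (p ^ 2))) :
    (α.map (phi p)).degree ≤ (C (p : ZMod (p ^ 2)) * α).degree := by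
  rw [degree_le_iff_coeff_zero]
  intro i hi
  have h0 : (C (p : ZMod (p ^ 2)) * α).coeff i = 0 := coeff_eq_zero_of_degree_lt hi
  rw [coeff_C_mul] at h0
  rw [coeff_map]
  exact (pmul_eq_zero_iff hp (α.coeff i)).1 h0

/-- Uniqueness of monic lifted factors. -/
lemma unique_lift {p : ℕ} (hp : p.Prime) {m a c a' c' : Polynomial (ZMod (p ^ 2))}
    (hsep : (m.map (phi p)).Separable) (ha : a.Monic) (ha' : a'.Monic)
    (heq : m = a * c) (heq' : m = a' * c')
    (hred : a.map (phi p) = a'.map (phi p)) : a = a' := by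
  haveI : Fact p.Prime := ⟨hp⟩
  haveI : Fact ((1:ℕ) < p ^ 2) := ⟨fact_nontrivial hp⟩
  by_contra hne
  set P : ZMod (p ^ 2) := (p : ZMod (p ^ 2)) with hP
  have hamap : (a.map (phi p)).Monic := ha.map _
  have hane : (a.map (phi p)) ≠ 0 := hamap.ne_zero
  have h1 : m.map (phi p) = a.map (phi p) * (c.map (phi p)) := by rw [heq, Polynomial.map_mul]
  have h2 : m.map (phi p) = a.map (phi p) * (c'.map (phi p)) := by
    rw [heq', Polynomial.map_mul, ← hred]
  have hcc' : c.map (phi p) = c'.map (phi p) := mul_left_cancel₀ hane (h1.symm.trans h2)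
  have hcop : IsCoprime (a.map (phi p)) (c.map (phi p)) := by
    have : ((a.map (phi p)) * (c.map (phi p))).Separable := by rw [← h1]; exact hsep
    exact this.isCoprime
  have hdm : (a' - a).map (phi p) = 0 := by rw [Polynomial.map_sub, hred, sub_self]
  obtain ⟨α, hα⟩ := (map_phi_eq_zero_iff hp _).1 hdm
  have hem : (c' - c).map (phi p) = 0 := by rw [Polynomial.map_sub, hcc', sub_self]
  obtain ⟨γ, hγ⟩ := (map_phi_eq_zero_iff hp _).1 hem
  have e1 : a' = a + C P * α := by rw [← hα]; ring
  have e2 : c' = c + C P * γ := by rw [← hγ]; ring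
  have hz : (C P * α) * (C P * γ) = 0 := by
    rw [mul_mul_mul_comm, ← C_mul, hP, psq_zero, C_0, zero_mul]
  have key : (a + C P * α) * (c + C P * γ) = a * c := by rw [← e1, ← e2, ← heq, ← heq']
  have h0 : C P * (a * γ + α * c) = 0 := by linear_combination key - hz
  have hmap0 : ((a * γ + α * c).map (phi p)) = 0 := (Cp_mul_eq_zero_iff hp _).1 h0
  have hrel : α.map (phi p) * c.map (phi p) =
      a.map (phi p) * (-(γ.map (phi p))) := by
    rw [Polynomial.map_add, Polynomial.map_mul, Polynomial.map_mul] at hmap0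
    linear_combination hmap0
  have hdvd : (a.map (phi p)) ∣ (α.map (phi p)) :=
    hcop.dvd_of_dvd_mul_right ⟨-(γ.map (phi p)), hrel⟩
  have hdeg_eq : a.degree = a'.degree := by
    calc a.degree = (a.map (phi p)).degree := (ha.degree_map (phi p)).symm
    _ = (a'.map (phi p)).degree := by rw [hred]
    _ = a'.degree := ha'.degree_map (phi p)
  have hd0 : a' - a ≠ 0 := fun h => hne (sub_eq_zero.1 h).symm
  have hlt : (a' - a).degree < a'.degree :=
    degree_sub_lt hdeg_eq.symm ha'.ne_zero (by rw [ha.leadingCoeff, ha'.leadingCoeff])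
  have hlt2 : (α.map (phi p)).degree < (a.map (phi p)).degree := by
    calc (α.map (phi p)).degree ≤ (C P * α).degree := degree_map_le_Cp_mul hp α
    _ = (a' - a).degree := by rw [hα]
    _ < a'.degree := hlt
    _ = (a.map (phi p)).degree := by rw [← hdeg_eq, ha.degree_map (phi p)]
  have hα0 : α.map (phi p) = 0 := eq_zero_of_dvd_of_degree_lt hdvd hlt2
  obtain ⟨β, hβ⟩ := (map_phi_eq_zero_iff hp α).1 hα0
  have : a' - a = 0 := by rw [hα, hβ, ← mul_assoc, ← C_mul, psq_zero, C_0, zero_mul]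
  exact hd0 this

/-- Existence of monic lifted factors (Hensel for `ℤ/p²`). -/
lemma exists_lift {p : ℕ} (hp : p.Prime) {m : Polynomial (ZMod (p ^ 2))}
    (hm : m.Monic) (hsep : (m.map (phi p)).Separable) {A : Polynomial (ZMod p)}
    (hA : A.Monic) (hdvd : A ∣ m.map (phi p)) :
    ∃ a : Polynomial (ZMod (p ^ 2)), a.Monic ∧ a ∣ m ∧ a.map (phi p) = A := by
  haveI : Fact p.Prime := ⟨hp⟩
  haveI : Fact ((1:ℕ) < p ^ 2) := ⟨fact_nontrivial hp⟩
  set P : ZMod (p ^ 2) := (p : ZMod (p ^ 2)) with hP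
  obtain ⟨B, hB⟩ := hdvd
  have hmm : (m.map (phi p)).Monic := hm.map _
  have hBmonic : B.Monic := hA.of_mul_monic_left (by rw [← hB]; exact hmm)
  have hcop : IsCoprime A B := (hB ▸ hsep).isCoprime
  obtain ⟨a₀, ha₀map, ha₀deg, ha₀monic⟩ :=
    lifts_and_degree_eq_and_monic ((mem_lifts A).2 (phi_surj p A)) hA
  obtain ⟨b₀, hb₀map, hb₀deg, hb₀monic⟩ :=
    lifts_and_degree_eq_and_monic ((mem_lifts B).2 (phi_surj p B)) hBmonic
  have hE : (m - a₀ * b₀).map (phi p) = 0 := by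
    rw [Polynomial.map_sub, Polynomial.map_mul, ha₀map, hb₀map, ← hB]; exact sub_self _
  obtain ⟨ε, hε⟩ := (map_phi_eq_zero_iff hp _).1 hE
  set e : Polynomial (ZMod p) := ε.map (phi p) with he
  obtain ⟨u, v, huv⟩ := hcop
  set r : Polynomial (ZMod p) := (e * v) %ₘ A with hr
  set q : Polynomial (ZMod p) := (e * v) /ₘ A with hq
  have hdiv : r + A * q = e * v := modByMonic_add_div (e * v) A
  have hid : r * B + (e * u + q * B) * A = e := by
    linear_combination B * hdiv + e * huv
  obtain ⟨α, hαmap, hαdeg⟩ := mem_lifts_and_degree_eq ((mem_lifts r).2 (phi_surj p r))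
  obtain ⟨β, hβmap⟩ := phi_surj p (e * u + q * B)
  have hCa : (C P * α).degree < a₀.degree := by
    calc (C P * α).degree ≤ α.degree := by
          refine le_trans (degree_mul_le _ _) ?_
          simpa using add_le_add_left (degree_C_le (a := P)) α.degree
    _ = r.degree := hαdeg
    _ < A.degree := degree_modByMonic_lt _ hA
    _ = a₀.degree := ha₀deg.symm
  have hamonic : (a₀ + C P * α).Monic := ha₀monic.add_of_left hCa
  have hcoeff : C P * (α * b₀ + a₀ * β - ε) = 0 := by
    rw [Cp_mul_eq_zero_iff hp]
    rw [Polynomial.map_sub, Polynomial.map_add, Polynomial.map_mul, Polynomial.map_mul,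
      hαmap, ha₀map, hβmap, hb₀map, ← he]
    linear_combination hid
  have hz : (C P * α) * (C P * β) = 0 := by
    rw [mul_mul_mul_comm, ← C_mul, psq_zero, C_0, zero_mul]
  have hprod : (a₀ + C P * α) * (b₀ + C P * β) = m := by
    linear_combination hcoeff + hz - hε
  refine ⟨a₀ + C P * α, hamonic, ⟨b₀ + C P * β, hprod.symm⟩, ?_⟩
  rw [Polynomial.map_add, Polynomial.map_mul, ha₀map, map_C]
  have hP0 : phi p P = 0 := by rw [hP, map_natCast, ZMod.natCast_self]
  rw [hP0, C_0, zero_mul, add_zero]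


lemma Qmk_eq_iff {p n : ℕ} {a b : Polynomial (ZMod (p ^ 2))} :
    Qmk p n a = Qmk p n b ↔ ∃ c, c * ((X : Polynomial (ZMod (p ^ 2))) ^ n - 1) = a - b := by
  show Ideal.Quotient.mk _ a = Ideal.Quotient.mk _ b ↔ _
  rw [Ideal.Quotient.eq, Ideal.mem_span_singleton']

lemma Qmk_surj (p n : ℕ) : Function.Surjective (Qmk p n) :=
  Ideal.Quotient.mk_surjective

/-- `⟨fh₁ + pf⟩ ∩ ⟨fh₂ + pf⟩ = ⟨f·lcm(h₁,h₂), p·f·gcd(g₁,g₂)⟩` in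
`ℤ_{p²}[x]/(xⁿ-1)`, where `L` is the (monic) lcm of `h₁, h₂` and `D` the (monic)
gcd of `g₁, g₂` among divisors of `xⁿ-1`. -/
theorem intersection_of_codes (p n : ℕ) (hp : p.Prime) (hn : 0 < n) (hco : Nat.Coprime n p)
    (f h₁ g₁ h₂ g₂ L D : Polynomial (ZMod (p ^ 2)))
    (hf : f.Monic) (hh₁ : h₁.Monic) (hg₁ : g₁.Monic) (hh₂ : h₂.Monic) (hg₂ : g₂.Monic)
    (hL : L.Monic) (hD : D.Monic)
    (hfac₁ : f * h₁ * g₁ = X ^ n - 1) (hfac₂ : f * h₂ * g₂ = X ^ n - 1)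
    (hL₁ : h₁ ∣ L) (hL₂ : h₂ ∣ L)
    (hLmin : ∀ m : Polynomial (ZMod (p ^ 2)), h₁ ∣ m → h₂ ∣ m → L ∣ m)
    (hD₁ : D ∣ g₁) (hD₂ : D ∣ g₂)
    (hDmax : ∀ e : Polynomial (ZMod (p ^ 2)), e ∣ g₁ → e ∣ g₂ → e ∣ D) :
    Ideal.span {Qmk p n (f * h₁ + (p : Polynomial (ZMod (p ^ 2))) * f)}
        ⊓ Ideal.span {Qmk p n (f * h₂ + (p : Polynomial (ZMod (p ^ 2))) * f)}
      = Ideal.span {Qmk p n (f * L), Qmk p n ((p : Polynomial (ZMod (p ^ 2))) * f * D)} := by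
  haveI : Fact p.Prime := ⟨hp⟩
  haveI : Fact ((1:ℕ) < p ^ 2) := ⟨fact_nontrivial hp⟩
  classical
  have hpC : ((p : Polynomial (ZMod (p ^ 2)))) = C ((p : ZMod (p ^ 2))) :=
    (map_natCast (C : ZMod (p ^ 2) →+* Polynomial (ZMod (p ^ 2))) p).symm
  have hpp : (p : Polynomial (ZMod (p ^ 2))) * (p : Polynomial (ZMod (p ^ 2))) = 0 := by
    rw [hpC, ← C_mul, psq_zero, C_0]
  have hphiP : phi p ((p : ℕ) : ZMod (p ^ 2)) = 0 := by
    rw [map_natCast, ZMod.natCast_self]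
  have hmapp : ∀ F : Polynomial (ZMod (p ^ 2)),
      ((p : Polynomial (ZMod (p ^ 2))) * F).map (phi p) = 0 := by
    intro F
    rw [hpC, Polynomial.map_mul, map_C, hphiP, C_0, zero_mul]
  -- the modulus
  obtain ⟨m, hm⟩ : ∃ m, m = h₁ * g₁ := ⟨_, rfl⟩
  have hxm : (X : Polynomial (ZMod (p ^ 2))) ^ n - 1 = f * m := by
    rw [hm, ← hfac₁, mul_assoc]
  have hmonicm : m.Monic := by rw [hm]; exact hh₁.mul hg₁
  have hm2 : m = h₂ * g₂ := by
    apply hf.isRegular.left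
    show f * m = f * (h₂ * g₂)
    rw [← hxm, ← mul_assoc, hfac₂]
  -- separability mod p
  have hnne : ((n : ZMod p)) ≠ 0 := by
    intro h
    haveI : NeZero p := ⟨hp.ne_zero⟩
    rw [ZMod.natCast_eq_zero_iff] at h
    have h1 : p ∣ Nat.gcd n p := Nat.dvd_gcd h dvd_rfl
    rw [hco] at h1
    exact hp.one_lt.ne' (Nat.eq_one_of_dvd_one h1)
  have hsepX : (((X : Polynomial (ZMod (p ^ 2))) ^ n - 1).map (phi p)).Separable := by
    have : ((X : Polynomial (ZMod (p ^ 2))) ^ n - 1).map (phi p)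
        = (X : Polynomial (ZMod p)) ^ n - 1 := by
      simp [Polynomial.map_sub, Polynomial.map_pow, Polynomial.map_one]
    rw [this]
    exact X_pow_sub_one_separable_iff.2 hnne
  have hsepm : (m.map (phi p)).Separable := by
    refine hsepX.of_dvd ?_
    rw [hxm, Polynomial.map_mul]
    exact Dvd.intro_left _ rfl
  have hsepg₁ : (g₁.map (phi p)).Separable :=
    hsepm.of_dvd (Polynomial.map_dvd _ ⟨h₁, by rw [hm]; ring⟩)
  have hsepg₂ : (g₂.map (phi p)).Separable :=
    hsepm.of_dvd (Polynomial.map_dvd _ ⟨h₂, by rw [hm2]; ring⟩)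
  -- coprimality over ZMod p²
  have cop₁ : IsCoprime h₁ g₁ := isCoprime_of_sep hp
    (by rw [← Polynomial.map_mul, ← hm]; exact hsepm)
  have cop₂ : IsCoprime h₂ g₂ := isCoprime_of_sep hp
    (by rw [← Polynomial.map_mul, ← hm2]; exact hsepm)
  -- lattice facts: m = L * D, g₁ = k₁ * D, g₂ = k₂ * D
  obtain ⟨s, hs⟩ := hLmin m ⟨g₁, hm⟩ ⟨g₂, hm2⟩
  obtain ⟨k₁, hk₁⟩ := hL₁
  obtain ⟨k₂, hk₂⟩ := hL₂
  have hsmonic : s.Monic := hL.of_mul_monic_left (by rw [← hs]; exact hmonicm)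
  have hg₁s : g₁ = k₁ * s := by
    apply hh₁.isRegular.left
    show h₁ * g₁ = h₁ * (k₁ * s)
    rw [← hm, hs, hk₁]; ring
  have hg₂s : g₂ = k₂ * s := by
    apply hh₂.isRegular.left
    show h₂ * g₂ = h₂ * (k₂ * s)
    rw [← hm2, hs, hk₂]; ring
  have hsD : s ∣ D := hDmax s ⟨k₁, by rw [hg₁s]; ring⟩ ⟨k₂, by rw [hg₂s]; ring⟩
  obtain ⟨t₁, ht₁⟩ := hD₁
  obtain ⟨t₂, ht₂⟩ := hD₂
  have hM : h₁ * t₁ = h₂ * t₂ := by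
    apply hD.isRegular.right
    show h₁ * t₁ * D = h₂ * t₂ * D
    linear_combination (-h₁) * ht₁ + h₂ * ht₂ - hm + hm2
  obtain ⟨w, hw⟩ := hLmin (h₁ * t₁) ⟨t₁, rfl⟩ ⟨t₂, hM⟩
  have hswD : s = w * D := by
    apply hL.isRegular.left
    show L * s = L * (w * D)
    linear_combination -hs + hm + h₁ * ht₁ + D * hw
  obtain ⟨t, ht⟩ := hsD
  have honeeq : (1 : Polynomial (ZMod (p ^ 2))) = t * w := by
    apply hD.isRegular.left
    show D * 1 = D * (t * w)
    linear_combination ht + t * hswD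
  have htunit : IsUnit t := IsUnit.of_mul_eq_one w honeeq.symm
  have hsD' : s = D := by
    refine eq_of_monic_of_associated hsmonic hD ⟨htunit.unit, ?_⟩
    rw [IsUnit.unit_spec]; exact ht.symm
  have hmLD : m = L * D := by rw [hs, hsD']
  have hg₁D : g₁ = k₁ * D := by rw [hg₁s, hsD']
  have hg₂D : g₂ = k₂ * D := by rw [hg₂s, hsD']
  have copLD : IsCoprime L D := isCoprime_of_sep hp
    (by rw [← Polynomial.map_mul, ← hmLD]; exact hsepm)
  -- coprimality of k₁, k₂ mod p
  have hG₁ne : g₁.map (phi p) ≠ 0 := (hg₁.map _).ne_zero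
  have hc0 : gcd (g₁.map (phi p)) (g₂.map (phi p)) ≠ 0 := by
    intro h
    exact hG₁ne ((gcd_eq_zero_iff _ _).1 h).1
  have hcmonic : (gcd (g₁.map (phi p)) (g₂.map (phi p))).Monic := by
    have := Polynomial.monic_normalize hc0
    rwa [normalize_gcd] at this
  obtain ⟨d₁, hd₁monic, hd₁dvd, hd₁map⟩ :=
    exists_lift hp hg₁ hsepg₁ hcmonic (gcd_dvd_left _ _)
  obtain ⟨d₂, hd₂monic, hd₂dvd, hd₂map⟩ :=
    exists_lift hp hg₂ hsepg₂ hcmonic (gcd_dvd_right _ _)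
  have hd12 : d₁ = d₂ := by
    obtain ⟨c₁, hc₁⟩ := hd₁dvd
    obtain ⟨c₂, hc₂⟩ := hd₂dvd
    refine unique_lift hp hsepm hd₁monic hd₂monic
      (show m = d₁ * (c₁ * h₁) by rw [hm, hc₁]; ring)
      (show m = d₂ * (c₂ * h₂) by rw [hm2, hc₂]; ring)
      (hd₁map.trans hd₂map.symm)
  have hdD : d₁ ∣ D := hDmax d₁ hd₁dvd (hd12 ▸ hd₂dvd)
  have hcd : gcd (g₁.map (phi p)) (g₂.map (phi p)) ∣ D.map (phi p) := by
    rw [← hd₁map]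
    exact Polynomial.map_dvd _ hdD
  have hcopk : IsCoprime (k₁.map (phi p)) (k₂.map (phi p)) := by
    rw [← gcd_isUnit_iff]
    have h1 : gcd (k₁.map (phi p)) (k₂.map (phi p)) * D.map (phi p) ∣ g₁.map (phi p) := by
      rw [hg₁D, Polynomial.map_mul]
      exact mul_dvd_mul (gcd_dvd_left _ _) dvd_rfl
    have h2 : gcd (k₁.map (phi p)) (k₂.map (phi p)) * D.map (phi p) ∣ g₂.map (phi p) := by
      rw [hg₂D, Polynomial.map_mul]
      exact mul_dvd_mul (gcd_dvd_right _ _) dvd_rfl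
    obtain ⟨z, hz⟩ := (dvd_gcd h1 h2).trans hcd
    have hDne : D.map (phi p) ≠ 0 := (hD.map _).ne_zero
    have hone : D.map (phi p) * (gcd (k₁.map (phi p)) (k₂.map (phi p)) * z)
        = D.map (phi p) * 1 := by linear_combination -hz
    exact IsUnit.of_mul_eq_one _ (mul_left_cancel₀ hDne hone)
  -- the lcm property mod p
  have hlcm : ∀ z : Polynomial (ZMod p),
      h₁.map (phi p) ∣ z → h₂.map (phi p) ∣ z → L.map (phi p) ∣ z := by
    intro z hz1 hz2
    obtain ⟨ρ, hρ⟩ := lcm_dvd (Polynomial.map_dvd (phi p) ⟨k₁, hk₁⟩)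
      (Polynomial.map_dvd (phi p) ⟨k₂, hk₂⟩)
    obtain ⟨l₁, hl₁⟩ := dvd_lcm_left (h₁.map (phi p)) (h₂.map (phi p))
    obtain ⟨l₂, hl₂⟩ := dvd_lcm_right (h₁.map (phi p)) (h₂.map (phi p))
    have hρ₁ : ρ ∣ k₁.map (phi p) := by
      refine ⟨l₁, mul_left_cancel₀ (hh₁.map (phi p)).ne_zero ?_⟩
      show h₁.map (phi p) * k₁.map (phi p) = h₁.map (phi p) * (ρ * l₁)
      rw [← Polynomial.map_mul, ← hk₁]
      calc L.map (phi p) = lcm (h₁.map (phi p)) (h₂.map (phi p)) * ρ := hρ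
      _ = h₁.map (phi p) * l₁ * ρ := by rw [← hl₁]
      _ = h₁.map (phi p) * (ρ * l₁) := by ring
    have hρ₂ : ρ ∣ k₂.map (phi p) := by
      refine ⟨l₂, mul_left_cancel₀ (hh₂.map (phi p)).ne_zero ?_⟩
      show h₂.map (phi p) * k₂.map (phi p) = h₂.map (phi p) * (ρ * l₂)
      rw [← Polynomial.map_mul, ← hk₂]
      calc L.map (phi p) = lcm (h₁.map (phi p)) (h₂.map (phi p)) * ρ := hρ
      _ = h₂.map (phi p) * l₂ * ρ := by rw [← hl₂]
      _ = h₂.map (phi p) * (ρ * l₂) := by ring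
    have hρunit : IsUnit ρ := hcopk.isUnit_of_dvd' hρ₁ hρ₂
    rw [hρ]
    exact (hρunit.mul_right_dvd).2 (lcm_dvd hz1 hz2)
  -- bezout for (h, g) pairs and (L, D)
  obtain ⟨u₁, v₁, huv₁⟩ := cop₁
  obtain ⟨u₂, v₂, huv₂⟩ := cop₂
  obtain ⟨uL, vD, huvLD⟩ := copLD
  -- Step 1 : ⟨f h + p f⟩ = ⟨f h, p f⟩
  have span1 : ∀ (h g u v : Polynomial (ZMod (p ^ 2))), u * h + v * g = 1 →
      f * h * g = X ^ n - 1 →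
      Ideal.span {Qmk p n (f * h + (p : Polynomial (ZMod (p ^ 2))) * f)} =
        Ideal.span {Qmk p n (f * h), Qmk p n ((p : Polynomial (ZMod (p ^ 2))) * f)} := by
    intro h g u v huv hfacp
    apply le_antisymm
    · rw [Ideal.span_le, Set.singleton_subset_iff]
      rw [map_add]
      exact Ideal.add_mem _ (Ideal.subset_span (by simp)) (Ideal.subset_span (by simp))
    · rw [Ideal.span_le, Set.insert_subset_iff, Set.singleton_subset_iff]
      have hpf : Qmk p n ((p : Polynomial (ZMod (p ^ 2))) * f) =
          Qmk p n ((u * (p : Polynomial (ZMod (p ^ 2))) + v * g) *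
            (f * h + (p : Polynomial (ZMod (p ^ 2))) * f)) := by
        rw [Qmk_eq_iff]
        refine ⟨-v, ?_⟩
        rw [← hfacp]
        have hup : u * (p : Polynomial (ZMod (p ^ 2))) *
            ((p : Polynomial (ZMod (p ^ 2))) * f) = 0 := by
          calc u * (p : Polynomial (ZMod (p ^ 2))) * ((p : Polynomial (ZMod (p ^ 2))) * f)
              = u * f * ((p : Polynomial (ZMod (p ^ 2))) * (p : Polynomial (ZMod (p ^ 2)))) := by
                ring
          _ = 0 := by rw [hpp, mul_zero]
        linear_combination ((p : Polynomial (ZMod (p ^ 2))) * f) * huv + hup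
      have hpfmem : Qmk p n ((p : Polynomial (ZMod (p ^ 2))) * f) ∈
          Ideal.span {Qmk p n (f * h + (p : Polynomial (ZMod (p ^ 2))) * f)} := by
        rw [hpf, map_mul]
        exact Ideal.mul_mem_left _ _ (Ideal.subset_span rfl)
      constructor
      · have : Qmk p n (f * h) = Qmk p n (f * h + (p : Polynomial (ZMod (p ^ 2))) * f)
            - Qmk p n ((p : Polynomial (ZMod (p ^ 2))) * f) := by
          rw [← map_sub]; congr 1; ring
        rw [this]
        exact Ideal.sub_mem _ (Ideal.subset_span rfl) hpfmem
      · exact hpfmem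
  have hC₁ := span1 h₁ g₁ u₁ v₁ huv₁ hfac₁
  have hC₂ := span1 h₂ g₂ u₂ v₂ huv₂ hfac₂
  apply le_antisymm
  · -- hard direction
    intro x hx
    obtain ⟨hx1, hx2⟩ := Submodule.mem_inf.1 hx
    rw [hC₁, Ideal.mem_span_pair] at hx1
    rw [hC₂, Ideal.mem_span_pair] at hx2
    obtain ⟨A₁, B₁, hAB₁⟩ := hx1
    obtain ⟨A₂, B₂, hAB₂⟩ := hx2
    obtain ⟨a₁, rfl⟩ := Qmk_surj p n A₁
    obtain ⟨b₁, rfl⟩ := Qmk_surj p n B₁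
    obtain ⟨a₂, rfl⟩ := Qmk_surj p n A₂
    obtain ⟨b₂, rfl⟩ := Qmk_surj p n B₂
    have hx1' : Qmk p n (a₁ * (f * h₁) + b₁ * ((p : Polynomial (ZMod (p ^ 2))) * f)) = x := by
      rw [map_add, map_mul, map_mul]; exact hAB₁
    have hx2' : Qmk p n (a₂ * (f * h₂) + b₂ * ((p : Polynomial (ZMod (p ^ 2))) * f)) = x := by
      rw [map_add, map_mul, map_mul]; exact hAB₂
    obtain ⟨q, hq⟩ := Qmk_eq_iff.1 (hx1'.trans hx2'.symm)
    -- W₁ and W₂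
    have hWW : a₁ * h₁ + (p : Polynomial (ZMod (p ^ 2))) * b₁
        = a₂ * h₂ + (p : Polynomial (ZMod (p ^ 2))) * b₂ + q * m := by
      apply hf.isRegular.left
      show f * (a₁ * h₁ + (p : Polynomial (ZMod (p ^ 2))) * b₁)
          = f * (a₂ * h₂ + (p : Polynomial (ZMod (p ^ 2))) * b₂ + q * m)
      linear_combination q * hxm - hq
    -- mod p divisibility
    have hW₁map : (a₁ * h₁ + (p : Polynomial (ZMod (p ^ 2))) * b₁).map (phi p)
        = a₁.map (phi p) * h₁.map (phi p) := by
      rw [Polynomial.map_add, Polynomial.map_mul, hmapp b₁, add_zero]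
    have hdvd1 : h₁.map (phi p) ∣
        (a₁ * h₁ + (p : Polynomial (ZMod (p ^ 2))) * b₁).map (phi p) := by
      rw [hW₁map]; exact Dvd.intro_left _ rfl
    have hdvd2 : h₂.map (phi p) ∣
        (a₁ * h₁ + (p : Polynomial (ZMod (p ^ 2))) * b₁).map (phi p) := by
      refine ⟨a₂.map (phi p) + q.map (phi p) * g₂.map (phi p), ?_⟩
      rw [hWW, Polynomial.map_add, Polynomial.map_add, hmapp b₂, Polynomial.map_mul,
        Polynomial.map_mul, hm2, Polynomial.map_mul]
      ring
    obtain ⟨zb, hzb⟩ := hlcm _ hdvd1 hdvd2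
    obtain ⟨z, hzmap⟩ := phi_surj p zb
    have hWz : ((a₁ * h₁ + (p : Polynomial (ZMod (p ^ 2))) * b₁) - L * z).map (phi p) = 0 := by
      rw [Polynomial.map_sub, Polynomial.map_mul, hzmap, ← hzb, sub_self]
    obtain ⟨γ, hγ⟩ := (map_phi_eq_zero_iff hp _).1 hWz
    rw [← hpC] at hγ
    -- representation
    have hrepr : f * (a₁ * h₁ + (p : Polynomial (ZMod (p ^ 2))) * b₁)
        = (z + (p : Polynomial (ZMod (p ^ 2))) * γ * uL) * (f * L)
          + (γ * vD) * ((p : Polynomial (ZMod (p ^ 2))) * f * D) := by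
      linear_combination f * hγ - (p : Polynomial (ZMod (p ^ 2))) * γ * f * huvLD
    have hxval : Qmk p n (f * (a₁ * h₁ + (p : Polynomial (ZMod (p ^ 2))) * b₁)) = x := by
      rw [← hx1']; congr 1; ring
    rw [Ideal.mem_span_pair]
    refine ⟨Qmk p n (z + (p : Polynomial (ZMod (p ^ 2))) * γ * uL), Qmk p n (γ * vD), ?_⟩
    rw [← map_mul, ← map_mul, ← map_add, ← hrepr, hxval]
  · -- easy direction
    rw [le_inf_iff]
    constructor
    · rw [hC₁, Ideal.span_le, Set.insert_subset_iff, Set.singleton_subset_iff]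
      constructor
      · rw [SetLike.mem_coe, Ideal.mem_span_pair]
        refine ⟨Qmk p n k₁, 0, ?_⟩
        rw [zero_mul, add_zero, ← map_mul]
        congr 1
        rw [hk₁]; ring
      · rw [SetLike.mem_coe, Ideal.mem_span_pair]
        refine ⟨0, Qmk p n D, ?_⟩
        rw [zero_mul, zero_add, ← map_mul]
        congr 1
        ring
    · rw [hC₂, Ideal.span_le, Set.insert_subset_iff, Set.singleton_subset_iff]
      constructor
      · rw [SetLike.mem_coe, Ideal.mem_span_pair]
        refine ⟨Qmk p n k₂, 0, ?_⟩
        rw [zero_mul, add_zero, ← map_mul]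
        congr 1
        rw [hk₂]; ring
      · rw [SetLike.mem_coe, Ideal.mem_span_pair]
        refine ⟨0, Qmk p n D, ?_⟩
        rw [zero_mul, zero_add, ← map_mul]
        congr 1
        ring
end

section
/- Let p be prime, n coprime to p, and let C = ⟨fh + pf⟩ and C' = ⟨f'h' + pf'⟩ be ideals in ℤ_{p²}[x]/(xⁿ-1), where fhg = xⁿ-1 and f'h'g' = xⁿ-1 with all factors monic. If C ⊆ C', then f' divides f. -/
open Polynomial

lemma zmodsq_cast_eq_zero_iff (p : ℕ) (hp : p.Prime) (z : ZMod (p^2)) :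
    ZMod.castHom (dvd_pow_self p two_ne_zero) (ZMod p) z = 0 ↔ (p : ZMod (p^2)) ∣ z := by
  haveI : NeZero (p^2) := ⟨pow_ne_zero _ hp.ne_zero⟩
  constructor
  · intro h0
    have h1 : ((z.val : ℕ) : ZMod p) = 0 := by
      rwa [ZMod.natCast_val, ← ZMod.castHom_apply (h := dvd_pow_self p two_ne_zero)]
    obtain ⟨k, hk⟩ := (ZMod.natCast_eq_zero_iff _ _).mp h1
    refine ⟨(k : ZMod (p^2)), ?_⟩
    rw [← Nat.cast_mul, ← hk, ZMod.natCast_zmod_val]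
  · rintro ⟨w, rfl⟩
    rw [map_mul, map_natCast, ZMod.natCast_self, zero_mul]

lemma poly_map_eq_zero (p : ℕ) (hp : p.Prime) (F : Polynomial (ZMod (p^2)))
    (hF : F.map (ZMod.castHom (dvd_pow_self p two_ne_zero) (ZMod p)) = 0) :
    ∃ G, F = (p : Polynomial (ZMod (p^2))) * G := by
  have h1 : F ∈ RingHom.ker (mapRingHom (ZMod.castHom (dvd_pow_self p two_ne_zero) (ZMod p))) := hF
  rw [Polynomial.ker_mapRingHom, Ideal.mem_map_C_iff] at h1
  have h2 : ∀ k, (p : ZMod (p^2)) ∣ F.coeff k := by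
    intro k
    have := h1 k
    rw [RingHom.mem_ker] at this
    exact (zmodsq_cast_eq_zero_iff p hp _).mp this
  choose c hc using h2
  classical
  refine ⟨∑ k ∈ F.support, Polynomial.C (c k) * X^k, ?_⟩
  rw [Finset.mul_sum]
  conv_lhs => rw [F.as_sum_support]
  refine Finset.sum_congr rfl fun k _ => ?_
  rw [← C_mul_X_pow_eq_monomial, hc k, map_mul, ← Polynomial.C_eq_natCast]
  ring

lemma poly_p_mul_eq_zero (p : ℕ) (hp : p.Prime) (F : Polynomial (ZMod (p^2)))
    (hF : (p : Polynomial (ZMod (p^2))) * F = 0) :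
    F.map (ZMod.castHom (dvd_pow_self p two_ne_zero) (ZMod p)) = 0 := by
  haveI : NeZero (p^2) := ⟨pow_ne_zero _ hp.ne_zero⟩
  rw [← Polynomial.C_eq_natCast] at hF
  ext k
  rw [coeff_map, coeff_zero]
  have h1 : (p : ZMod (p^2)) * F.coeff k = 0 := by
    have := congrArg (fun q => Polynomial.coeff q k) hF
    simpa [coeff_C_mul] using this
  -- scalar argument
  have h2 : ((p * (F.coeff k).val : ℕ) : ZMod (p^2)) = 0 := by
    push_cast
    rw [ZMod.natCast_zmod_val]; exact h1
  obtain ⟨m, hm⟩ := (ZMod.natCast_eq_zero_iff _ _).mp h2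
  have h3 : p ∣ (F.coeff k).val :=
    ⟨m, Nat.eq_of_mul_eq_mul_left hp.pos (by rw [hm]; ring)⟩
  have h4 : (((F.coeff k).val : ℕ) : ZMod p) = 0 := (ZMod.natCast_eq_zero_iff _ _).mpr h3
  rw [ZMod.castHom_apply]; rwa [ZMod.natCast_val] at h4

lemma coprime_lift (p : ℕ) (hp : p.Prime) (a b : Polynomial (ZMod (p^2)))
    (hab : IsCoprime (a.map (ZMod.castHom (dvd_pow_self p two_ne_zero) (ZMod p)))
      (b.map (ZMod.castHom (dvd_pow_self p two_ne_zero) (ZMod p)))) :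
    IsCoprime a b := by
  set r := ZMod.castHom (dvd_pow_self p two_ne_zero) (ZMod p)
  obtain ⟨U', V', hUV⟩ := hab
  haveI : NeZero p := ⟨hp.ne_zero⟩
  haveI : NeZero (p^2) := ⟨pow_ne_zero _ hp.ne_zero⟩
  have hsur : Function.Surjective r := fun x =>
    ⟨((x.val : ℕ) : ZMod (p^2)), by rw [map_natCast, ZMod.natCast_zmod_val]⟩
  obtain ⟨U, hU⟩ := Polynomial.map_surjective r hsur U'
  obtain ⟨V, hV⟩ := Polynomial.map_surjective r hsur V'
  have h0 : (U * a + V * b - 1).map r = 0 := by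
    rw [Polynomial.map_sub, Polynomial.map_add, Polynomial.map_mul, Polynomial.map_mul,
      Polynomial.map_one, hU, hV, hUV, sub_self]
  obtain ⟨E, hE⟩ := poly_map_eq_zero p hp _ h0
  have hsq : ((p : Polynomial (ZMod (p^2))))^2 = 0 := by
    rw [← Nat.cast_pow]
    simp [ZMod.natCast_self]
  refine ⟨U * (1 - (p : Polynomial (ZMod (p^2))) * E), V * (1 - (p : Polynomial (ZMod (p^2))) * E), ?_⟩
  have h1 : U * a + V * b = 1 + (p : Polynomial (ZMod (p^2))) * E := by rw [← hE]; ring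
  linear_combination (1 - (p : Polynomial (ZMod (p^2))) * E) * h1 - E^2 * hsq

/-- if `C = ⟨fh + pf⟩ ⊆ C' = ⟨f'h' + pf'⟩` in `ℤ_{p²}[x]/(xⁿ-1)`,
then `f'` divides `f`. -/
theorem dvd_of_code_subset (p n : ℕ) (hp : p.Prime) (hn : 0 < n) (hco : Nat.Coprime n p)
    (f h g f' h' g' : Polynomial (ZMod (p ^ 2)))
    (hf : f.Monic) (hh : h.Monic) (hg : g.Monic)
    (hf' : f'.Monic) (hh' : h'.Monic) (hg' : g'.Monic)
    (hfac : f * h * g = X ^ n - 1) (hfac' : f' * h' * g' = X ^ n - 1)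
    (hsub : Ideal.span {Qmk p n (f * h + (p : Polynomial (ZMod (p ^ 2))) * f)}
      ≤ Ideal.span {Qmk p n (f' * h' + (p : Polynomial (ZMod (p ^ 2))) * f')}) :
    f' ∣ f := by
  haveI : Fact p.Prime := ⟨hp⟩
  haveI : NeZero p := ⟨hp.ne_zero⟩
  haveI : NeZero (p^2) := ⟨pow_ne_zero _ hp.ne_zero⟩
  set r : ZMod (p^2) →+* ZMod p := ZMod.castHom (dvd_pow_self p two_ne_zero) (ZMod p) with hr
  -- Step 1: extract the explicit membership equation
  have hmem : Qmk p n (f * h + (p : Polynomial (ZMod (p ^ 2))) * f)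
      ∈ Ideal.span {Qmk p n (f' * h' + (p : Polynomial (ZMod (p ^ 2))) * f')} :=
    hsub (Ideal.mem_span_singleton_self _)
  obtain ⟨t, ht⟩ := Ideal.mem_span_singleton.mp hmem
  obtain ⟨u, rfl⟩ := Ideal.Quotient.mk_surjective t
  have hz : Qmk p n (f * h + (p : Polynomial (ZMod (p ^ 2))) * f
      - (f' * h' + (p : Polynomial (ZMod (p ^ 2))) * f') * u) = 0 := by
    simp only [Qmk] at ht ⊢
    rw [map_sub, map_mul, ht]
    exact sub_self _
  rw [Qmk] at hz
  rw [Ideal.Quotient.eq_zero_iff_mem, Ideal.mem_span_singleton] at hz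
  obtain ⟨v, E⟩ := hz
  -- Step 2: reductions mod p
  have hmapXn : ((X:Polynomial (ZMod (p^2)))^n - 1).map r = (X:Polynomial (ZMod p))^n - 1 := by
    simp
  have hpmap : ((p : Polynomial (ZMod (p^2)))).map r = 0 := by
    simp [Polynomial.map_natCast, CharP.cast_eq_zero]
  have hfacp : f.map r * h.map r * g.map r = (X:Polynomial (ZMod p))^n - 1 := by
    rw [← Polynomial.map_mul, ← Polynomial.map_mul, hfac, hmapXn]
  have hfacp' : f'.map r * h'.map r * g'.map r = (X:Polynomial (ZMod p))^n - 1 := by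
    rw [← Polynomial.map_mul, ← Polynomial.map_mul, hfac', hmapXn]
  have hn' : (n : ZMod p) ≠ 0 := by
    intro h0
    exact ((Nat.Prime.coprime_iff_not_dvd hp).mp hco.symm)
      ((ZMod.natCast_eq_zero_iff n p).mp h0)
  have sep : ((X:Polynomial (ZMod p))^n - 1).Separable := by
    have := Polynomial.separable_X_pow_sub_C (1 : ZMod p) hn' one_ne_zero
    simpa using this
  have sep1 : (f.map r * h.map r * g.map r).Separable := hfacp ▸ sep
  have sep1' : (f'.map r * h'.map r * g'.map r).Separable := hfacp' ▸ sep
  have cohg : IsCoprime (h.map r) (g.map r) := by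
    rw [mul_assoc] at sep1
    exact sep1.of_mul_right.isCoprime
  have cof'g' : IsCoprime (f'.map r) (g'.map r) := by
    have h1 : ((f'.map r * g'.map r) * h'.map r).Separable := by
      rwa [show (f'.map r * g'.map r) * h'.map r = f'.map r * h'.map r * g'.map r from by ring]
    exact h1.of_mul_left.isCoprime
  have cofhg : IsCoprime (f.map r) (h.map r * g.map r) := by
    rw [mul_assoc] at sep1
    exact sep1.isCoprime
  -- D1 : f̄' ∣ f̄ h̄
  have Emap := congrArg (Polynomial.map r) E
  simp only [Polynomial.map_sub, Polynomial.map_add, Polynomial.map_mul, hpmap, hmapXn,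
    zero_mul, add_zero] at Emap
  have D1 : f'.map r ∣ f.map r * h.map r := by
    refine ⟨h'.map r * u.map r + h'.map r * g'.map r * v.map r, ?_⟩
    linear_combination Emap - v.map r * hfacp'
  -- D2 : f̄' ∣ f̄ (ḡ ḡ')
  have hpB : (p : Polynomial (ZMod (p^2))) * (f*g*g' - u*g*f'*g')
      = ((X:Polynomial (ZMod (p^2)))^n - 1) * (u*g + v*g*g' - g') := by
    linear_combination (g*g') * E - g' * hfac + u*g*hfac'
  have hB0 : (u*g + v*g*g' - g').map r = 0 := by
    have h1 := congrArg (Polynomial.map r) hpB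
    simp only [Polynomial.map_mul, hpmap, hmapXn, zero_mul] at h1
    have hXne : ((X:Polynomial (ZMod p))^n - 1) ≠ 0 := by
      have := Polynomial.monic_X_pow_sub_C (1 : ZMod p) hn.ne'
      simp only [map_one] at this
      exact this.ne_zero
    rcases mul_eq_zero.mp h1.symm with h2 | h2
    · exact absurd h2 hXne
    · exact h2
  obtain ⟨B₁, hB₁⟩ := poly_map_eq_zero p hp _ hB0
  have hpz : (p : Polynomial (ZMod (p^2)))
      * (f*g*g' - u*g*f'*g' - ((X:Polynomial (ZMod (p^2)))^n - 1) * B₁) = 0 := by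
    linear_combination hpB + ((X:Polynomial (ZMod (p^2)))^n - 1) * hB₁
  have hA0 := poly_p_mul_eq_zero p hp _ hpz
  simp only [Polynomial.map_sub, Polynomial.map_mul, Polynomial.map_pow, Polynomial.map_X, Polynomial.map_one, hmapXn] at hA0
  have D2 : f'.map r ∣ f.map r * (g.map r * g'.map r) := by
    refine ⟨h'.map r * g'.map r * B₁.map r + u.map r * (g.map r * g'.map r), ?_⟩
    have h2 : f.map r * g.map r * g'.map r - u.map r * g.map r * f'.map r * g'.map r
        - ((X:Polynomial (ZMod p))^n - 1) * B₁.map r = 0 := hA0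
    linear_combination h2 - B₁.map r * hfacp'
  -- D3 : f̄' ∣ f̄ via gcd argument
  have hfdvd : f'.map r ∣ f.map r := by
    have hgl := dvd_gcd D1 D2
    rw [gcd_mul_left] at hgl
    set d := gcd (h.map r) (g.map r * g'.map r) with hd
    have hdg : IsCoprime d (g.map r) :=
      IsCoprime.of_isCoprime_of_dvd_left cohg (gcd_dvd_left _ _)
    have hdg' : d ∣ g'.map r := hdg.dvd_of_dvd_mul_left (gcd_dvd_right _ _)
    have cof'd : IsCoprime (f'.map r) d :=
      IsCoprime.of_isCoprime_of_dvd_right cof'g' hdg'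
    have h5 : f'.map r ∣ normalize (f.map r) := cof'd.dvd_of_dvd_mul_right hgl
    rwa [dvd_normalize_iff] at h5
  -- Step 3: lift coprimality and conclude
  have cof'hg : IsCoprime (f'.map r) (h.map r * g.map r) :=
    IsCoprime.of_isCoprime_of_dvd_left cofhg hfdvd
  have colift : IsCoprime f' (h * g) := by
    apply coprime_lift p hp
    rwa [Polynomial.map_mul]
  have hdvd : f' ∣ f * (h * g) := ⟨h' * g', by rw [← mul_assoc, hfac, ← hfac']; ring⟩
  exact colift.dvd_of_dvd_mul_right hdvd
end

section
/- Let p be an odd prime, and let 𝒞 be a ℤ_p ℤ_{p²}-additive cyclic code, i.e., an additive subgroup of ℤ_p^α × ℤ_{p²}^β closed under the simultaneous cyclic shift π(u', u'') = (cyclic shift of u', cyclic shift of u''). Then the kernel 𝒦(𝒞) = { u ∈ 𝒞 : p·P(u,v) ∈ 𝒞 for all v ∈ 𝒞 } is also closed under π, i.e., 𝒦(𝒞) is a ℤ_p ℤ_{p²}-additive cyclic code. -/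
/-- The ambient group `ℤ_p^α × ℤ_{p²}^β` of a `ℤ_p ℤ_{p²}`-additive code. -/
abbrev Amb (p α β : ℕ) := (Fin α → ZMod p) × (Fin β → ZMod (p ^ 2))

/-- The vector `p·P(u,v) = (0, (p·P(u₂ⱼ, v₂ⱼ))ⱼ)` of carries. -/
def carryVec {p α β : ℕ} (u v : Amb p α β) : Amb p α β :=
  (0, fun j => ((p * carry p (u.2 j) (v.2 j) : ℕ) : ZMod (p ^ 2)))

/-- The carry vector on the `ℤ_{p²}`-block alone: `(p·P(uⱼ, vⱼ))ⱼ`. -/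
def carryY {p β : ℕ} (u v : Fin β → ZMod (p ^ 2)) : Fin β → ZMod (p ^ 2) :=
  fun j => ((p * carry p (u j) (v j) : ℕ) : ZMod (p ^ 2))

/-- Cyclic shift `(u₀,…,u_{n-1}) ↦ (u_{n-1}, u₀, …, u_{n-2})`, i.e. `(π u)ᵢ = u_{i-1}`. -/
def cshift {n : ℕ} {M : Type*} (u : Fin n → M) : Fin n → M :=
  fun i => u ((finRotate n).symm i)

/-- Inverse cyclic shift, `(π⁻¹ u)ᵢ = u_{i+1}`. -/
def cshiftInv {n : ℕ} {M : Type*} (u : Fin n → M) : Fin n → M :=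
  fun i => u (finRotate n i)

/-- The simultaneous cyclic shift `π` on `ℤ_p^α × ℤ_{p²}^β`. -/
def shiftAmb {p α β : ℕ} (u : Amb p α β) : Amb p α β :=
  (cshift u.1, cshift u.2)

/-- The inverse simultaneous cyclic shift `π⁻¹`. -/
def shiftAmbInv {p α β : ℕ} (u : Amb p α β) : Amb p α β :=
  (cshiftInv u.1, cshiftInv u.2)

lemma shiftAmb_shiftAmbInv {p α β : ℕ} (v : Amb p α β) :
    shiftAmb (shiftAmbInv v) = v := by
  unfold shiftAmb shiftAmbInv cshift cshiftInv
  refine Prod.ext ?_ ?_ <;> funext i <;> simp only [Equiv.apply_symm_apply]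

lemma shiftAmbInv_shiftAmb {p α β : ℕ} (v : Amb p α β) :
    shiftAmbInv (shiftAmb v) = v := by
  unfold shiftAmb shiftAmbInv cshift cshiftInv
  refine Prod.ext ?_ ?_ <;> funext i <;> simp only [Equiv.symm_apply_apply]

lemma carryVec_shift {p α β : ℕ} (u v : Amb p α β) :
    carryVec (shiftAmb u) v = shiftAmb (carryVec u (shiftAmbInv v)) := by
  unfold carryVec shiftAmb shiftAmbInv cshift cshiftInv
  refine Prod.ext ?_ ?_
  · funext i; simp
  · funext j; simp only [Equiv.apply_symm_apply]

/-- if `𝒞` is a `ℤ_p ℤ_{p²}`-additive cyclic code, then its kernel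
`𝒦(𝒞) = { u ∈ 𝒞 : pP(u,v) ∈ 𝒞 ∀ v ∈ 𝒞 }` is also closed under the shift `π`. -/
theorem kernel_cyclic (p α β : ℕ) (hp : p.Prime) (hodd : Odd p)
    (C : AddSubgroup (Amb p α β)) (hcyc : ∀ u ∈ C, shiftAmb u ∈ C) :
    ∀ u : Amb p α β, (u ∈ C ∧ ∀ v ∈ C, carryVec u v ∈ C) →
      (shiftAmb u ∈ C ∧ ∀ v ∈ C, carryVec (shiftAmb u) v ∈ C) := by
  have hinv : ∀ v ∈ C, shiftAmbInv v ∈ C := by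
    have hsurj : Function.Surjective (fun x : C => (⟨shiftAmb x.1, hcyc x.1 x.2⟩ : C)) := by
      haveI : NeZero p := ⟨hp.pos.ne'⟩
      haveI : NeZero (p ^ 2) := ⟨pow_ne_zero 2 hp.pos.ne'⟩
      have : Finite (Amb p α β) := by infer_instance
      apply Finite.surjective_of_injective
      intro x y hxy
      have : shiftAmb (x : Amb p α β) = shiftAmb (y : Amb p α β) := congrArg Subtype.val hxy
      have := congrArg shiftAmbInv this
      rw [shiftAmbInv_shiftAmb, shiftAmbInv_shiftAmb] at this
      exact Subtype.ext this
    intro v hv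
    obtain ⟨x, hx⟩ := hsurj ⟨v, hv⟩
    have : shiftAmb (x : Amb p α β) = v := congrArg Subtype.val hx
    have h2 : shiftAmbInv v = (x : Amb p α β) := by
      rw [← this, shiftAmbInv_shiftAmb]
    rw [h2]; exact x.2
  rintro u ⟨huC, hker⟩
  refine ⟨hcyc u huC, fun v hv => ?_⟩
  rw [carryVec_shift]
  exact hcyc _ (hker _ (hinv v hv))
end

section
/- Let p be an odd prime and 𝒞 a ℤ_p ℤ_{p²}-additive code (a subgroup of ℤ_p^α × ℤ_{p²}^β). Then the kernel satisfies 𝒦(𝒞) ⊆ 𝒞_X × 𝒦(𝒞_Y), where 𝒞_X is the projection of 𝒞 to ℤ_p^α, 𝒞_Y its projection to ℤ_{p²}^β, and 𝒦(𝒞_Y) = { u₂ ∈ 𝒞_Y : p·P(u₂,v₂) ∈ 𝒞_Y for all v₂ ∈ 𝒞_Y }. -/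
/-- `𝒦(𝒞) ⊆ 𝒞_X × 𝒦(𝒞_Y)`, where `𝒞_X`, `𝒞_Y` are the projections
of `𝒞` onto the two blocks. -/
theorem kernel_subset_prod (p α β : ℕ) (hp : p.Prime) (hodd : Odd p)
    (C : AddSubgroup (Amb p α β)) :
    ∀ u : Amb p α β, (u ∈ C ∧ ∀ v ∈ C, carryVec u v ∈ C) →
      (u.1 ∈ Prod.fst '' (C : Set (Amb p α β)) ∧
        u.2 ∈ Prod.snd '' (C : Set (Amb p α β)) ∧
        ∀ v₂ ∈ Prod.snd '' (C : Set (Amb p α β)),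
          carryY u.2 v₂ ∈ Prod.snd '' (C : Set (Amb p α β))) := by
  rintro u ⟨huC, hcar⟩
  refine ⟨⟨u, huC, rfl⟩, ⟨u, huC, rfl⟩, ?_⟩
  rintro v₂ ⟨w, hwC, rfl⟩
  exact ⟨carryVec u w, hcar w hwC, rfl⟩
end

section
/- Let p be an odd prime and 𝒞 = 𝒞_X × 𝒞_Y a separable ℤ_p ℤ_{p²}-additive code (i.e., 𝒞 is the direct product of a linear code 𝒞_X ≤ ℤ_p^α and a linear code 𝒞_Y ≤ ℤ_{p²}^β). Then 𝒦(𝒞) = 𝒞_X × 𝒦(𝒞_Y). -/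
/-- for a separable code `𝒞 = 𝒞_X × 𝒞_Y`, `𝒦(𝒞) = 𝒞_X × 𝒦(𝒞_Y)`. -/
theorem kernel_of_separable (p α β : ℕ) (hp : p.Prime) (hodd : Odd p)
    (CX : AddSubgroup (Fin α → ZMod p)) (CY : AddSubgroup (Fin β → ZMod (p ^ 2))) :
    {u : Amb p α β | u ∈ CX.prod CY ∧ ∀ v ∈ CX.prod CY, carryVec u v ∈ CX.prod CY}
      = (CX : Set (Fin α → ZMod p)) ×ˢ
          {u₂ : Fin β → ZMod (p ^ 2) | u₂ ∈ CY ∧ ∀ v₂ ∈ CY, carryY u₂ v₂ ∈ CY} := by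
  ext u
  constructor
  · rintro ⟨⟨h1, h2⟩, h3⟩
    refine ⟨h1, h2, fun v₂ hv₂ => ?_⟩
    have := h3 (0, v₂) ⟨CX.zero_mem, hv₂⟩
    exact this.2
  · rintro ⟨h1, h2, h3⟩
    refine ⟨⟨h1, h2⟩, fun v hv => ⟨CX.zero_mem, h3 v.2 hv.2⟩⟩
end

section
/- Let p be an odd prime, 𝒞 ≤ ℤ_p^α × ℤ_{p²}^β a ℤ_p ℤ_{p²}-additive code, and Φ the extended Gray map. Then the ℤ_p-linear span ⟨Φ(𝒞)⟩ is generated by the set Φ(𝒞) ∪ { Φ(p·P(w₁,w₂)) : w₁, w₂ ∈ 𝒞 }. In particular, Φ(𝒞) is a ℤ_p-linear subspace of ℤ_p^{α+pβ} if and only if p·P(u,v) ∈ 𝒞 for all u, v ∈ 𝒞. -/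
/-- The extended Gray map `Φ : ℤ_p^α × ℤ_{p²}^β → ℤ_p^{α+pβ}` (identity on the
first block, coordinatewise Gray map `φ` on the second block). -/
def grayExt {p α β : ℕ} (u : Amb p α β) : (Fin α ⊕ Fin β × Fin p) → ZMod p :=
  Sum.elim u.1 (fun x => gray p (u.2 x.1) x.2)

section Aux

variable {p : ℕ} (hp : p.Prime)

lemma neZero_psq (hp : p.Prime) : NeZero (p ^ 2) :=
  ⟨pow_ne_zero _ hp.ne_zero⟩

lemma carry_le_one (u v : ZMod (p ^ 2)) : carry p u v ≤ 1 := by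
  unfold carry; split_ifs <;> simp

lemma val_p_mul_carry (hp : p.Prime) (u v : ZMod (p ^ 2)) :
    ((p * carry p u v : ℕ) : ZMod (p ^ 2)).val = p * carry p u v := by
  haveI := neZero_psq hp
  rw [ZMod.val_natCast, Nat.mod_eq_of_lt]
  calc p * carry p u v ≤ p * 1 := Nat.mul_le_mul_left _ (carry_le_one u v)
    _ < p ^ 2 := by nlinarith [hp.two_le]

lemma gray_p_mul_carry (hp : p.Prime) (u v : ZMod (p ^ 2)) :
    gray p ((p * carry p u v : ℕ) : ZMod (p ^ 2))
      = fun _ => (carry p u v : ZMod p) := by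
  funext i
  simp only [gray, val_p_mul_carry hp, Nat.mul_div_cancel_left _ hp.pos,
    Nat.mul_mod_right, Nat.cast_zero, zero_mul, add_zero]

lemma gray_add (hp : p.Prime) (u v : ZMod (p ^ 2)) :
    gray p (u + v) = gray p u + gray p v
      + gray p ((p * carry p u v : ℕ) : ZMod (p ^ 2)) := by
  haveI := neZero_psq hp
  have hp0 : 0 < p := hp.pos
  funext i
  have hval : (u + v).val = (u.val + v.val) % p ^ 2 := ZMod.val_add u v
  set a := u.val with ha
  set b := v.val with hb
  have hc : carry p u v = if p ≤ a % p + b % p then 1 else 0 := rfl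
  have hdiv : (u + v).val / p = (a / p + b / p + carry p u v) % p := by
    rw [hval, pow_two, Nat.mod_mul_right_div_self, Nat.add_div hp0, hc]
  have hmod : (u + v).val % p = (a % p + b % p) % p := by
    rw [hval, Nat.mod_mod_of_dvd _ (dvd_pow_self p two_ne_zero), Nat.add_mod]
  rw [Pi.add_apply, Pi.add_apply, gray_p_mul_carry hp]
  simp only [gray, hdiv, hmod, ZMod.natCast_mod]
  push_cast [ZMod.natCast_mod]
  ring

lemma gray_zero (hp : p.Prime) : gray p (0 : ZMod (p ^ 2)) = 0 := by
  haveI := neZero_psq hp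
  funext i
  simp [gray]

lemma carry_eq_zero_of_right (hp : p.Prime) {u v : ZMod (p ^ 2)}
    (h : v.val % p = 0) : carry p u v = 0 := by
  unfold carry
  rw [h, if_neg]
  have := Nat.mod_lt u.val hp.pos
  omega

lemma gray_add_of_right (hp : p.Prime) {u v : ZMod (p ^ 2)}
    (h : v.val % p = 0) : gray p (u + v) = gray p u + gray p v := by
  rw [gray_add hp, carry_eq_zero_of_right hp h]
  simp [gray_zero hp]

lemma gray_injective (hp : p.Prime) : Function.Injective (gray p) := by
  haveI := neZero_psq hp
  intro u v h
  have h0 := congrFun h ⟨0, hp.pos⟩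
  have h1 := congrFun h ⟨1, hp.one_lt⟩
  simp only [gray, Fin.val_mk, Nat.cast_zero, Nat.cast_one, mul_zero, mul_one,
    add_zero] at h0 h1
  rw [h0] at h1
  have hm := add_left_cancel h1
  have hup : u.val < p ^ 2 := ZMod.val_lt u
  have hvp : v.val < p ^ 2 := ZMod.val_lt v
  have hdlt : u.val / p < p := by
    apply Nat.div_lt_of_lt_mul; rw [← pow_two]; exact hup
  have hdlt' : v.val / p < p := by
    apply Nat.div_lt_of_lt_mul; rw [← pow_two]; exact hvp
  have h1' : u.val / p = v.val / p := by
    have := congrArg ZMod.val h0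
    rwa [ZMod.val_natCast, ZMod.val_natCast, Nat.mod_eq_of_lt hdlt,
      Nat.mod_eq_of_lt hdlt'] at this
  have h2' : u.val % p = v.val % p := by
    have := congrArg ZMod.val hm
    rwa [ZMod.val_natCast, ZMod.val_natCast,
      Nat.mod_eq_of_lt (Nat.mod_lt _ hp.pos),
      Nat.mod_eq_of_lt (Nat.mod_lt _ hp.pos)] at this
  have : u.val = v.val := by
    conv_lhs => rw [← Nat.div_add_mod u.val p]
    conv_rhs => rw [← Nat.div_add_mod v.val p]
    rw [h1', h2']
  exact ZMod.val_injective _ this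

end Aux

section ExtAux

variable {p α β : ℕ}

lemma grayExt_add (hp : p.Prime) (u v : Amb p α β) :
    grayExt (u + v) = grayExt u + grayExt v + grayExt (carryVec u v) := by
  funext x
  cases x with
  | inl a => simp [grayExt, carryVec]
  | inr b =>
      have := congrFun (gray_add hp (u.2 b.1) (v.2 b.1)) b.2
      simpa [grayExt, carryVec] using this

lemma grayExt_zero (hp : p.Prime) : grayExt (0 : Amb p α β) = 0 := by
  funext x
  cases x with
  | inl a => simp [grayExt]
  | inr b => simp [grayExt, gray_zero hp]

/-- addition with a vector whose second block has low digits zero is carry-free -/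
lemma grayExt_add_of_right (hp : p.Prime) {u v : Amb p α β}
    (h : ∀ j, (v.2 j).val % p = 0) :
    grayExt (u + v) = grayExt u + grayExt v := by
  rw [grayExt_add hp]
  have hc : grayExt (carryVec u v) = 0 := by
    funext x
    cases x with
    | inl a => simp [grayExt, carryVec]
    | inr b =>
        simp [grayExt, carryVec, carry_eq_zero_of_right hp (h b.1),
          gray_zero hp]
  rw [hc, add_zero]

lemma carryVec_low (hp : p.Prime) (u v : Amb p α β) (j : Fin β) :
    ((carryVec u v).2 j).val % p = 0 := by
  rw [carryVec, val_p_mul_carry hp, Nat.mul_mod_right]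

lemma grayExt_injective (hp : p.Prime) :
    Function.Injective (grayExt (p := p) (α := α) (β := β)) := by
  intro u v h
  refine Prod.ext (funext fun a => congrFun h (Sum.inl a)) (funext fun j => ?_)
  apply gray_injective hp
  funext i
  exact congrFun h (Sum.inr (j, i))

lemma psmul_zero' (x : (Fin α ⊕ Fin β × Fin p) → ZMod p) : p • x = 0 := by
  funext i
  simp [Pi.smul_apply, nsmul_eq_mul, ZMod.natCast_self]

end ExtAux

/-- the span of `Φ(𝒞)` is generated by `Φ(𝒞)` together with the
Gray images of the carry vectors; and `Φ(𝒞)` is linear iff `pP(u,v) ∈ 𝒞` for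
all `u, v ∈ 𝒞`. -/
theorem span_gray_image (p α β : ℕ) (hp : p.Prime) (hodd : Odd p)
    (C : AddSubgroup (Amb p α β)) :
    Submodule.span (ZMod p) (grayExt '' (C : Set (Amb p α β)))
      = Submodule.span (ZMod p)
          (grayExt '' (C : Set (Amb p α β)) ∪
            grayExt '' {x : Amb p α β | ∃ w₁ ∈ C, ∃ w₂ ∈ C, x = carryVec w₁ w₂}) ∧
    ((∃ W : Submodule (ZMod p) ((Fin α ⊕ Fin β × Fin p) → ZMod p),
        (W : Set ((Fin α ⊕ Fin β × Fin p) → ZMod p)) = grayExt '' (C : Set (Amb p α β)))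
      ↔ ∀ u ∈ C, ∀ v ∈ C, carryVec u v ∈ C) := by
  haveI := neZero_psq hp
  constructor
  · -- span equality
    apply le_antisymm
    · exact Submodule.span_mono Set.subset_union_left
    · refine Submodule.span_le.mpr (Set.union_subset Submodule.subset_span ?_)
      rintro x ⟨w, ⟨w₁, h₁, w₂, h₂, rfl⟩, rfl⟩
      have hkey : grayExt (carryVec w₁ w₂)
          = grayExt (w₁ + w₂) - grayExt w₁ - grayExt w₂ := by
        rw [grayExt_add hp]; abel
      rw [hkey]
      exact sub_mem (sub_mem
        (Submodule.subset_span ⟨_, C.add_mem h₁ h₂, rfl⟩)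
        (Submodule.subset_span ⟨_, h₁, rfl⟩))
        (Submodule.subset_span ⟨_, h₂, rfl⟩)
  · constructor
    · -- linear ⇒ carries in C
      rintro ⟨W, hW⟩ u hu v hv
      have hu' : grayExt u ∈ (W : Set _) := by rw [hW]; exact ⟨u, hu, rfl⟩
      have hv' : grayExt v ∈ (W : Set _) := by rw [hW]; exact ⟨v, hv, rfl⟩
      have hsum : grayExt u + grayExt v ∈ (W : Set _) := W.add_mem hu' hv'
      rw [hW] at hsum
      obtain ⟨w, hwC, hwe⟩ := hsum
      set c := carryVec u v with hc
      have h1 : grayExt (w + c) = grayExt (u + v) := by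
        rw [grayExt_add_of_right hp (fun j => carryVec_low hp u v j), hwe,
          grayExt_add hp]
      have h2 : w + c = u + v := grayExt_injective hp h1
      have : c = u + v - w := by rw [← h2]; abel
      rw [this]
      exact C.sub_mem (C.add_mem hu hv) hwC
    · -- carries in C ⇒ linear
      intro h
      -- Φ(C) is closed under addition
      have hadd : ∀ x ∈ grayExt '' (C : Set (Amb p α β)),
          ∀ y ∈ grayExt '' (C : Set (Amb p α β)),
          x + y ∈ grayExt '' (C : Set (Amb p α β)) := by
        rintro _ ⟨u, hu, rfl⟩ _ ⟨v, hv, rfl⟩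
        set c := carryVec u v with hc
        refine ⟨u + v - c, C.sub_mem (C.add_mem hu hv) (h u hu v hv), ?_⟩
        have h1 : grayExt ((u + v - c) + c) = grayExt (u + v - c) + grayExt c :=
          grayExt_add_of_right hp (fun j => carryVec_low hp u v j)
        have h2 : (u + v - c) + c = u + v := by abel
        rw [h2] at h1
        rw [grayExt_add hp] at h1
        -- h1 : Φu + Φv + Φc = Φ(u+v-c) + Φc
        have := add_right_cancel h1
        exact this.symm
      have hzero : (0 : (Fin α ⊕ Fin β × Fin p) → ZMod p)
          ∈ grayExt '' (C : Set (Amb p α β)) :=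
        ⟨0, C.zero_mem, grayExt_zero hp⟩
      have hnsmul : ∀ (n : ℕ), ∀ x ∈ grayExt '' (C : Set (Amb p α β)),
          n • x ∈ grayExt '' (C : Set (Amb p α β)) := by
        intro n
        induction n with
        | zero => intro x hx; simpa using hzero
        | succ k ih =>
            intro x hx
            have : (k + 1) • x = k • x + x := by rw [add_nsmul, one_nsmul]
            rw [this]
            exact hadd _ (ih x hx) _ hx
      have hneg : ∀ x ∈ grayExt '' (C : Set (Amb p α β)),
          -x ∈ grayExt '' (C : Set (Amb p α β)) := by
        intro x hx
        have hpx : p • x = 0 := psmul_zero' x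
        have hp1 : (p - 1) + 1 = p := Nat.succ_pred_eq_of_pos hp.pos
        have key : (p - 1) • x + x = 0 := by
          have h3 : (p - 1) • x + x = ((p - 1) + 1) • x := by
            rw [add_nsmul, one_nsmul]
          rw [h3, hp1, hpx]
        have hneq : -x = (p - 1) • x := neg_eq_of_add_eq_zero_left key
        rw [hneq]
        exact hnsmul _ x hx
      let S : AddSubgroup ((Fin α ⊕ Fin β × Fin p) → ZMod p) :=
        { carrier := grayExt '' (C : Set (Amb p α β))
          zero_mem' := hzero
          add_mem' := fun hx hy => hadd _ hx _ hy
          neg_mem' := fun hx => hneg _ hx }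
      refine ⟨AddSubgroup.toZModSubmodule p S, ?_⟩
      simp [S]
end

section
/- Let p be a prime and u ∈ ℤ_{p²}^β an element with p·u = 0 (order dividing p). Then for every positive integer i with 0 ≤ i < p, the Gray map satisfies Φ(i·u) = i·Φ(u), where Φ: ℤ_{p²}^β → ℤ_p^{pβ} applies φ coordinatewise. -/
/-- for `u ∈ ℤ_{p²}^β` with `p·u = 0` and `0 < i < p`,
`Φ(i·u) = i·Φ(u)`, where `Φ` applies `φ` coordinatewise. -/
theorem grayVec_nsmul (p β : ℕ) (hp : p.Prime) (u : Fin β → ZMod (p ^ 2))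
    (hu : ∀ j, (p : ZMod (p ^ 2)) * u j = 0) (i : ℕ) (hi0 : 0 < i) (hip : i < p) :
    (fun x : Fin β × Fin p => gray p (i • u x.1) x.2)
      = fun x : Fin β × Fin p => i • gray p (u x.1) x.2 := by
  have hp0 : 0 < p := hp.pos
  have hpp : 1 < p ^ 2 := by nlinarith [hp.one_lt]
  haveI : NeZero (p ^ 2) := ⟨by positivity⟩
  funext x
  obtain ⟨j, k⟩ := x
  simp only
  set n := (u j).val with hn
  have hnlt : n < p ^ 2 := ZMod.val_lt _
  have hdvd : p ∣ n := by
    have h := hu j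
    have h2 : ((p * n : ℕ) : ZMod (p ^ 2)) = 0 := by
      push_cast
      rw [ZMod.natCast_val, ZMod.cast_id]
      exact h
    rw [ZMod.natCast_eq_zero_iff] at h2
    rw [pow_two] at h2
    exact (Nat.mul_dvd_mul_iff_left hp0).mp h2
  obtain ⟨t, ht⟩ := hdvd
  have htp : t < p := by nlinarith
  have hval : (i • u j).val = p * (i * t % p) := by
    have huj : u j = ((n : ℕ) : ZMod (p ^ 2)) := by
      rw [hn, ZMod.natCast_val, ZMod.cast_id]
    rw [huj, nsmul_eq_mul, ← Nat.cast_mul, ZMod.val_natCast, ht, pow_two]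
    rw [show i * (p * t) = p * (i * t) by ring, Nat.mul_mod_mul_left]
  unfold gray
  rw [hval, Nat.mul_div_cancel_left _ hp0, Nat.mul_mod_right, ← hn, ht,
    Nat.mul_div_cancel_left _ hp0, Nat.mul_mod_right]
  simp only [ZMod.natCast_mod, Nat.cast_zero, zero_mul, add_zero, nsmul_eq_mul, Nat.cast_mul]
end

section
/- Let p be prime, n coprime to p, and f, h, g monic polynomials over ℤ_{p²} with fhg = xⁿ - 1. In ℤ_{p²}[x]/(xⁿ-1), the subcode of order-p elements of the cyclic code C = ⟨fh + pf⟩ (i.e., { c ∈ C : p·c = 0 }) equals the ideal ⟨pf⟩. -/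
open Polynomial

section Aux

variable {p : ℕ}

lemma pp_zero (p : ℕ) : ((p : ZMod (p ^ 2)) * p) = 0 := by
  have h : ((p * p : ℕ) : ZMod (p ^ 2)) = 0 := by
    rw [← pow_two]; exact ZMod.natCast_self _
  push_cast at h
  exact h

lemma pp_zero_poly (p : ℕ) : ((p : Polynomial (ZMod (p ^ 2))) * p) = 0 := by
  rw [← Polynomial.C_eq_natCast, ← Polynomial.C_mul, pp_zero, Polynomial.C_0]

lemma elem_p_mul (hp : p.Prime) (c : ZMod (p ^ 2)) (h : (p : ZMod (p ^ 2)) * c = 0) :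
    ∃ d : ZMod (p ^ 2), c = (p : ZMod (p ^ 2)) * d := by
  haveI : NeZero (p ^ 2) := ⟨pow_ne_zero 2 hp.ne_zero⟩
  have hc : ((c.val : ℕ) : ZMod (p ^ 2)) = c := ZMod.natCast_rightInverse c
  have h2 : ((p * c.val : ℕ) : ZMod (p ^ 2)) = 0 := by push_cast [hc]; exact h
  rw [ZMod.natCast_eq_zero_iff] at h2
  have h2' : p * p ∣ p * c.val := by rwa [← pow_two]
  have h3 : p ∣ c.val := (mul_dvd_mul_iff_left (a := p) (by exact_mod_cast hp.ne_zero)).1 h2'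
  obtain ⟨k, hk⟩ := h3
  refine ⟨(k : ZMod (p ^ 2)), ?_⟩
  calc c = ((c.val : ℕ) : ZMod (p ^ 2)) := hc.symm
    _ = ((p * k : ℕ) : ZMod (p ^ 2)) := by rw [hk]
    _ = (p : ZMod (p ^ 2)) * (k : ZMod (p ^ 2)) := by push_cast; ring

lemma elem_p_map (hp : p.Prime) (c : ZMod (p ^ 2))
    (h : ZMod.castHom (dvd_pow_self p two_ne_zero) (ZMod p) c = 0) :
    ∃ d : ZMod (p ^ 2), c = (p : ZMod (p ^ 2)) * d := by
  haveI : NeZero (p ^ 2) := ⟨pow_ne_zero 2 hp.ne_zero⟩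
  haveI : NeZero p := ⟨hp.ne_zero⟩
  have hc : ((c.val : ℕ) : ZMod (p ^ 2)) = c := ZMod.natCast_rightInverse c
  have h2 : ((c.val : ℕ) : ZMod p) = 0 := by
    have := (ZMod.castHom (dvd_pow_self p two_ne_zero) (ZMod p)).congr_arg hc
    rw [map_natCast] at this
    rw [this, h]
  rw [ZMod.natCast_eq_zero_iff] at h2
  obtain ⟨k, hk⟩ := h2
  refine ⟨(k : ZMod (p ^ 2)), ?_⟩
  calc c = ((c.val : ℕ) : ZMod (p ^ 2)) := hc.symm
    _ = ((p * k : ℕ) : ZMod (p ^ 2)) := by rw [hk]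
    _ = (p : ZMod (p ^ 2)) * (k : ZMod (p ^ 2)) := by push_cast; ring

lemma poly_p (a : Polynomial (ZMod (p ^ 2)))
    (h : ∀ i, ∃ d, a.coeff i = (p : ZMod (p ^ 2)) * d) :
    ∃ b, a = (p : Polynomial (ZMod (p ^ 2))) * b := by
  have hmem : a ∈ Ideal.map (Polynomial.C) (Ideal.span {(p : ZMod (p ^ 2))}) := by
    rw [Ideal.mem_map_C_iff]
    intro i
    rw [Ideal.mem_span_singleton]
    obtain ⟨d, hd⟩ := h i
    exact ⟨d, hd⟩
  rw [Ideal.map_span, Set.image_singleton, Ideal.mem_span_singleton] at hmem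
  obtain ⟨b, hb⟩ := hmem
  exact ⟨b, by rw [hb, Polynomial.C_eq_natCast]⟩

lemma poly_p_of_mul (hp : p.Prime) (a : Polynomial (ZMod (p ^ 2)))
    (h : (p : Polynomial (ZMod (p ^ 2))) * a = 0) :
    ∃ b, a = (p : Polynomial (ZMod (p ^ 2))) * b := by
  apply poly_p a
  intro i
  apply elem_p_mul hp
  have h' : Polynomial.C ((p : ZMod (p ^ 2))) * a = 0 := by
    rw [Polynomial.C_eq_natCast]; exact h
  have := congrArg (fun q => Polynomial.coeff q i) h'
  simpa [Polynomial.coeff_C_mul] using this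

lemma poly_p_of_map (hp : p.Prime) (a : Polynomial (ZMod (p ^ 2)))
    (h : a.map (ZMod.castHom (dvd_pow_self p two_ne_zero) (ZMod p)) = 0) :
    ∃ b, a = (p : Polynomial (ZMod (p ^ 2))) * b := by
  apply poly_p a
  intro i
  apply elem_p_map hp
  have := congrArg (fun q => Polynomial.coeff q i) h
  simpa [Polynomial.coeff_map] using this

end Aux

/-- the subcode of order-`p` elements of `C = ⟨fh + pf⟩` in
`ℤ_{p²}[x]/(xⁿ-1)` equals the ideal `⟨pf⟩`. -/
theorem order_p_subcode (p n : ℕ) (hp : p.Prime) (hn : 0 < n) (hco : Nat.Coprime n p)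
    (f h g : Polynomial (ZMod (p ^ 2))) (hf : f.Monic) (hh : h.Monic) (hg : g.Monic)
    (hfac : f * h * g = X ^ n - 1) :
    ∀ c : Polynomial (ZMod (p ^ 2)) ⧸ Ideal.span {(X : Polynomial (ZMod (p ^ 2))) ^ n - 1},
      (c ∈ Ideal.span {Qmk p n (f * h + (p : Polynomial (ZMod (p ^ 2))) * f)} ∧
          (p : Polynomial (ZMod (p ^ 2)) ⧸ Ideal.span {(X : Polynomial (ZMod (p ^ 2))) ^ n - 1}) * c = 0)
        ↔ c ∈ Ideal.span {Qmk p n ((p : Polynomial (ZMod (p ^ 2))) * f)} := by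
  haveI : Fact p.Prime := ⟨hp⟩
  haveI : NeZero (p ^ 2) := ⟨pow_ne_zero 2 hp.ne_zero⟩
  haveI : Nontrivial (ZMod (p ^ 2)) := by
    haveI : Fact (1 < p ^ 2) := ⟨Nat.one_lt_pow two_ne_zero hp.one_lt⟩
    infer_instance
  set I : Ideal (Polynomial (ZMod (p ^ 2))) :=
    Ideal.span {(X : Polynomial (ZMod (p ^ 2))) ^ n - 1} with hI
  set φ : ZMod (p ^ 2) →+* ZMod p := ZMod.castHom (dvd_pow_self p two_ne_zero) (ZMod p) with hφ
  have hφsurj : Function.Surjective φ := by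
    intro x
    refine ⟨((x.val : ℕ) : ZMod (p ^ 2)), ?_⟩
    rw [map_natCast]
    exact ZMod.natCast_rightInverse x
  have hQ : ∀ a : Polynomial (ZMod (p ^ 2)), Qmk p n a = Ideal.Quotient.mk I a := fun _ => rfl
  have hpz := pp_zero_poly p
  -- coprimality of h and g mod p, lifted
  obtain ⟨lam, mu, s, hlms⟩ :
      ∃ lam mu s : Polynomial (ZMod (p ^ 2)),
        lam * h + mu * g = 1 + (p : Polynomial (ZMod (p ^ 2))) * s := by
    have hsep : ((X : Polynomial (ZMod p)) ^ n - 1).Separable := by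
      rw [Polynomial.X_pow_sub_one_separable_iff]
      rw [Ne, ZMod.natCast_eq_zero_iff]
      intro hdvd
      have h1 : p ∣ Nat.gcd n p := Nat.dvd_gcd hdvd dvd_rfl
      rw [hco] at h1
      exact hp.one_lt.ne' (Nat.dvd_one.1 h1)
    have hmap : (f.map φ) * ((h.map φ) * (g.map φ)) = (X : Polynomial (ZMod p)) ^ n - 1 := by
      have := congrArg (Polynomial.map φ) hfac
      simpa [Polynomial.map_mul, Polynomial.map_sub, Polynomial.map_pow, mul_assoc] using this
    have hsep2 : ((h.map φ) * (g.map φ)).Separable := by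
      rw [← hmap] at hsep
      exact hsep.of_mul_right
    have hcop : IsCoprime (h.map φ) (g.map φ) := hsep2.isCoprime
    obtain ⟨lb, mb, hlb⟩ := hcop
    obtain ⟨lam, hlam⟩ := Polynomial.map_surjective φ hφsurj lb
    obtain ⟨mu, hmu⟩ := Polynomial.map_surjective φ hφsurj mb
    have hker : (lam * h + mu * g - 1).map φ = 0 := by
      simp [Polynomial.map_add, Polynomial.map_mul, Polynomial.map_sub, hlam, hmu, hlb]
    obtain ⟨s, hs⟩ := poly_p_of_map hp _ hker
    exact ⟨lam, mu, s, by linear_combination hs⟩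
  intro c
  constructor
  · rintro ⟨hmem, hpc⟩
    rw [Ideal.mem_span_singleton] at hmem ⊢
    obtain ⟨d, hd⟩ := hmem
    obtain ⟨a, rfl⟩ := Ideal.Quotient.mk_surjective d
    -- p * c = 0 gives p*((fh+pf)*a) ∈ I
    rw [hd, hQ, ← map_natCast (Ideal.Quotient.mk I) p, ← map_mul, ← map_mul] at hpc
    rw [Ideal.Quotient.eq_zero_iff_mem, hI, Ideal.mem_span_singleton] at hpc
    obtain ⟨q, hq⟩ := hpc
    have hqq : f * h * ((p : Polynomial (ZMod (p ^ 2))) * a) = f * h * (g * q) := by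
      rw [← hfac] at hq
      linear_combination hq - (f * a) * hpz
    have hcancel : (p : Polynomial (ZMod (p ^ 2))) * a = g * q :=
      (hf.mul hh).isRegular.left hqq
    -- reduce mod p : g*q ≡ 0, g monic, so q ≡ 0 mod p
    have hqmap : q.map φ = 0 := by
      have h0 : (g.map φ) * (q.map φ) = 0 := by
        have := congrArg (Polynomial.map φ) hcancel
        simpa [Polynomial.map_mul, ZMod.natCast_self] using this.symm
      rcases mul_eq_zero.1 h0 with hgz | hqz
      · exact absurd hgz (hg.map φ).ne_zero
      · exact hqz
    obtain ⟨q', hq'⟩ := poly_p_of_map hp q hqmap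
    have hza : (p : Polynomial (ZMod (p ^ 2))) * (a - g * q') = 0 := by
      linear_combination hcancel + g * hq'
    obtain ⟨a', ha'⟩ := poly_p_of_mul hp _ hza
    have haa : a = g * q' + (p : Polynomial (ZMod (p ^ 2))) * a' := by linear_combination ha'
    refine ⟨Ideal.Quotient.mk I (g * q' + a' * h), ?_⟩
    rw [hd, hQ, hQ, ← map_mul, ← map_mul, Ideal.Quotient.eq, hI, Ideal.mem_span_singleton]
    refine ⟨q', ?_⟩
    linear_combination (f * h + (p : Polynomial (ZMod (p ^ 2))) * f) * haa + q' * hfac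
      + (f * a') * hpz
  · intro hmem
    rw [Ideal.mem_span_singleton] at hmem
    obtain ⟨d, hd⟩ := hmem
    obtain ⟨b, rfl⟩ := Ideal.Quotient.mk_surjective d
    constructor
    · rw [Ideal.mem_span_singleton, hd]
      refine ⟨Ideal.Quotient.mk I ((lam * (p : Polynomial (ZMod (p ^ 2))) + mu * g) * b), ?_⟩
      rw [hQ, hQ, ← map_mul, ← map_mul, Ideal.Quotient.eq, hI, Ideal.mem_span_singleton]
      refine ⟨-(mu * b), ?_⟩
      linear_combination (-((p : Polynomial (ZMod (p ^ 2))) * f * b)) * hlms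
        + (-(mu * b)) * hfac + (-(lam * f * b + f * s * b)) * hpz
    · rw [hd, hQ, ← map_natCast (Ideal.Quotient.mk I) p, ← map_mul, ← map_mul]
      have h0 : (p : Polynomial (ZMod (p ^ 2))) * ((p : Polynomial (ZMod (p ^ 2))) * f * b) = 0 := by
        linear_combination (f * b) * hpz
      rw [h0, map_zero]
end

section
/- Let p be an odd prime, n a prime with p a primitive root modulo n, and consider the cyclic code C = ⟨x - 1⟩ in ℤ_{p²}[x]/(xⁿ-1). Then the Gray image Φ(C) is not a ℤ_p-linear code; equivalently, there exist u, v ∈ C with p·P(u,v) ∉ C. -/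
open Polynomial

/-- for `p` an odd prime and `n` prime with `p` a primitive root
modulo `n`, the Gray image of `C = ⟨x-1⟩ ⊆ ℤ_{p²}[x]/(xⁿ-1)` is not linear:
there exist `u, v ∈ C` whose carry vector `pP(u,v)` is not in `C`. -/
theorem gray_image_not_linear (p n : ℕ) (hp : p.Prime) (hodd : Odd p) (hn : n.Prime)
    (hord : orderOf ((p : ZMod n)) = n - 1) :
    ∃ u v : Polynomial (ZMod (p ^ 2)),
      Qmk p n u ∈ Ideal.span {Qmk p n (X - 1)} ∧
      Qmk p n v ∈ Ideal.span {Qmk p n (X - 1)} ∧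
      Qmk p n (∑ j ∈ Finset.range n,
          Polynomial.C ((p : ZMod (p ^ 2)) *
            (if p ≤ (u.coeff j).val % p + (v.coeff j).val % p then 1 else 0)) * X ^ j)
        ∉ Ideal.span {Qmk p n (X - 1)} := by
  have hp2 : 2 ≤ p := hp.two_le
  have hp3 : 3 ≤ p := by
    rcases hodd with ⟨k, hk⟩; omega
  haveI : NeZero (p ^ 2) := ⟨by positivity⟩
  have hsq : p ≤ p ^ 2 := by nlinarith
  have hsq' : p < p ^ 2 := by nlinarith
  set a : ZMod (p ^ 2) := (p : ZMod (p ^ 2)) - 1 with ha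
  set u : Polynomial (ZMod (p ^ 2)) := C a * (X - 1) with hu
  -- coefficients of u
  have hc0 : u.coeff 0 = -a := by simp [hu, coeff_C_mul]
  have hc1 : u.coeff 1 = a := by
    simp [hu, coeff_C_mul, coeff_one]
  have hcj : ∀ j, 2 ≤ j → u.coeff j = 0 := by
    intro j hj
    simp only [hu, coeff_C_mul, coeff_sub, coeff_X, coeff_one]
    rw [if_neg (by omega), if_neg (by omega)]
    ring
  -- values
  have hva : a.val % p = p - 1 := by
    have h1 : a = ((p - 1 : ℕ) : ZMod (p ^ 2)) := by
      rw [Nat.cast_sub (by omega : 1 ≤ p), Nat.cast_one, ha]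
    rw [h1, ZMod.val_natCast,
      Nat.mod_eq_of_lt (show p - 1 < p ^ 2 from by omega),
      Nat.mod_eq_of_lt (show p - 1 < p from by omega)]
  have hvna : (-a).val % p = 1 := by
    have h1 : -a = ((p ^ 2 - p + 1 : ℕ) : ZMod (p ^ 2)) := by
      rw [Nat.cast_add, Nat.cast_sub hsq, ZMod.natCast_self, Nat.cast_one, ha]
      ring
    have h3 : p * (p - 1) = p * p - p := by rw [Nat.mul_sub, mul_one]
    have h4 : p ^ 2 = p * p := sq p
    have h2 : p ^ 2 - p + 1 = p * (p - 1) + 1 := by omega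
    rw [h1, ZMod.val_natCast,
      Nat.mod_eq_of_lt (show p ^ 2 - p + 1 < p ^ 2 from by omega),
      h2, Nat.mul_add_mod, Nat.mod_eq_of_lt (show 1 < p from by omega)]
  refine ⟨u, u, ?_, ?_, ?_⟩
  · rw [hu, map_mul]
    exact Ideal.mul_mem_left _ _ (Ideal.mem_span_singleton_self _)
  · rw [hu, map_mul]
    exact Ideal.mul_mem_left _ _ (Ideal.mem_span_singleton_self _)
  · intro hmem
    set S : Polynomial (ZMod (p ^ 2)) := ∑ j ∈ Finset.range n,
        Polynomial.C ((p : ZMod (p ^ 2)) *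
          (if p ≤ (u.coeff j).val % p + (u.coeff j).val % p then 1 else 0)) * X ^ j with hS
    rw [Ideal.mem_span_singleton'] at hmem
    obtain ⟨c, hc⟩ := hmem
    obtain ⟨q, rfl⟩ := Ideal.Quotient.mk_surjective c
    have hc' : Qmk p n (q * (X - 1)) = Qmk p n S := by
      rw [map_mul]; exact hc
    have hdvd := Ideal.Quotient.eq.mp hc'
    rw [Ideal.mem_span_singleton] at hdvd
    obtain ⟨s, hs⟩ := hdvd
    have heval := congrArg (Polynomial.eval (1 : ZMod (p ^ 2))) hs
    simp only [eval_sub, eval_mul, eval_X, eval_one, eval_pow, one_pow, sub_self,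
      mul_zero, zero_mul] at heval
    have hS0 : S.eval 1 = 0 := by linear_combination -heval
    -- compute S.eval 1
    have hn2 : 2 ≤ n := hn.two_le
    have hSeval : S.eval 1 = (p : ZMod (p ^ 2)) := by
      rw [hS, eval_finset_sum]
      rw [Finset.sum_eq_single_of_mem 1 (Finset.mem_range.mpr (by omega))]
      · rw [hc1, hva, if_pos (by omega)]
        simp
      · intro j hj hj1
        rcases Nat.eq_zero_or_pos j with h0 | h0
        · subst h0
          rw [hc0, hvna, if_neg (by omega), mul_zero, map_zero, zero_mul, eval_zero]
        · have h2 : 2 ≤ j := by omega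
          rw [hcj j h2]
          rw [if_neg (by simp [ZMod.val_zero]; omega), mul_zero, map_zero, zero_mul, eval_zero]
    rw [hSeval] at hS0
    have hd := (ZMod.natCast_eq_zero_iff p (p ^ 2)).mp hS0
    have := Nat.le_of_dvd (by omega) hd
    omega
end

section
/- Let p be prime, n coprime to p, and C = ⟨fh + pf⟩ ⊆ ℤ_{p²}[x]/(xⁿ-1) a cyclic code with fhg = xⁿ-1 (monic factors). Then as an abelian group, C ≅ (ℤ_{p²})^{deg g} × (ℤ_p)^{deg h}; in particular |C| = p^{2·deg(g) + deg(h)}. -/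
open Polynomial

-- generic polyOf
noncomputable def polyOf {R : Type*} [CommRing R] {n : ℕ} (c : Fin n → R) : R[X] :=
  ∑ i : Fin n, C (c i) * X ^ (i : ℕ)

lemma polyOf_coeff {R : Type*} [CommRing R] {n : ℕ} (c : Fin n → R) (k : ℕ) :
    (polyOf c).coeff k = if hk : k < n then c ⟨k, hk⟩ else 0 := by
  rw [polyOf, finset_sum_coeff]
  simp only [coeff_C_mul, coeff_X_pow]
  split
  · next hk =>
    rw [Finset.sum_eq_single (⟨k, hk⟩ : Fin n)]
    · simp
    · intro b _ hb
      simp only [mul_ite, mul_one, mul_zero, ite_eq_right_iff]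
      intro hbk; exact absurd (Fin.ext hbk.symm) hb
    · simp
  · next hk =>
    apply Finset.sum_eq_zero
    intro i _
    simp only [mul_ite, mul_one, mul_zero, ite_eq_right_iff]
    intro hik; omega
lemma polyOf_degree_lt {R : Type*} [CommRing R] {n : ℕ} (c : Fin n → R) :
    (polyOf c).degree < n := by
  apply lt_of_le_of_lt (degree_sum_le _ _)
  rw [Finset.sup_lt_iff]
  · intro i _
    exact lt_of_le_of_lt (degree_C_mul_X_pow_le _ _) (by exact_mod_cast i.isLt)
  · exact_mod_cast WithBot.bot_lt_coe n
lemma polyOf_add {R : Type*} [CommRing R] {n : ℕ} (c d : Fin n → R) :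
    polyOf (c + d) = polyOf c + polyOf d := by
  rw [polyOf, polyOf, polyOf, ← Finset.sum_add_distrib]
  congr 1; ext i; simp [add_mul]
lemma polyOf_eq_self {R : Type*} [CommRing R] {n : ℕ} (u : R[X]) (hu : u.degree < n) :
    polyOf (fun i : Fin n => u.coeff i) = u := by
  ext k
  rw [polyOf_coeff]
  split
  · rfl
  · next hk => exact (coeff_eq_zero_of_degree_lt (lt_of_lt_of_le hu (by exact_mod_cast Nat.le_of_not_lt hk))).symm
lemma polyOf_map {R S : Type*} [CommRing R] [CommRing S] (φ : R →+* S) {n : ℕ} (c : Fin n → R) :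
    (polyOf c).map φ = polyOf (fun i => φ (c i)) := by
  simp [polyOf, Polynomial.map_sum]

section zmod
variable {p : ℕ} (hp : p.Prime)

lemma psq_cast_zero : (p : ZMod (p^2)) * (p : ZMod (p^2)) = 0 := by
  have : ((p * p : ℕ) : ZMod (p^2)) = 0 := by
    rw [← pow_two, ZMod.natCast_self]
  exact_mod_cast this

/-- reduction hom ZMod p² → ZMod p -/
noncomputable def red (p : ℕ) : ZMod (p^2) →+* ZMod p :=
  ZMod.castHom (dvd_pow_self p two_ne_zero) (ZMod p)

include hp

lemma pmul_mod (m : ℕ) :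
    (p : ZMod (p^2)) * ((m % p : ℕ) : ZMod (p^2)) = (p : ZMod (p^2)) * (m : ℕ) := by
  conv_rhs => rw [← Nat.mod_add_div m p]
  push_cast
  rw [mul_add, ← mul_assoc, psq_cast_zero, zero_mul, add_zero]

lemma red_eq_zero_iff (c : ZMod (p^2)) :
    red p c = 0 ↔ ∃ d, c = (p : ZMod (p^2)) * d := by
  haveI : NeZero (p^2) := ⟨pow_ne_zero 2 hp.ne_zero⟩
  constructor
  · intro hc
    have hval : ((c.val : ℕ) : ZMod p) = 0 := by
      rw [← hc, red, ZMod.castHom_apply, ← ZMod.natCast_val]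
    rw [ZMod.natCast_eq_zero_iff] at hval
    refine ⟨((c.val / p : ℕ) : ZMod (p^2)), ?_⟩
    have : c = ((c.val : ℕ) : ZMod (p^2)) := (ZMod.natCast_rightInverse c).symm
    conv_lhs => rw [this]
    rw [← Nat.cast_mul, Nat.mul_div_cancel' hval]
  · rintro ⟨d, rfl⟩
    rw [map_mul, red, map_natCast, CharP.cast_eq_zero, zero_mul]

lemma p_mul_eq_zero_iff (c : ZMod (p^2)) :
    (p : ZMod (p^2)) * c = 0 ↔ red p c = 0 := by
  haveI : NeZero (p^2) := ⟨pow_ne_zero 2 hp.ne_zero⟩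
  rw [red_eq_zero_iff hp]
  constructor
  · intro hc
    have : c = ((c.val : ℕ) : ZMod (p^2)) := (ZMod.natCast_rightInverse c).symm
    rw [this, ← Nat.cast_mul, ZMod.natCast_eq_zero_iff] at hc
    obtain ⟨k, hk⟩ := hc
    have hval : p ∣ c.val := ⟨k, Nat.eq_of_mul_eq_mul_left hp.pos (by rw [hk]; ring)⟩
    refine ⟨((c.val / p : ℕ) : ZMod (p^2)), ?_⟩
    conv_lhs => rw [this]
    rw [← Nat.cast_mul, Nat.mul_div_cancel' hval]
  · rintro ⟨d, rfl⟩
    rw [← mul_assoc, psq_cast_zero, zero_mul]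
end zmod

section polyzmod
variable {p : ℕ} (hp : p.Prime)

lemma natCast_poly_eq_C : ((p : ℕ) : Polynomial (ZMod (p^2))) = C ((p : ℕ) : ZMod (p^2)) := by
  simp

include hp

lemma exists_of_map_red_zero (u : Polynomial (ZMod (p^2))) (hu : u.map (red p) = 0) :
    ∃ v, u = ((p : ℕ) : Polynomial (ZMod (p^2))) * v := by
  have hcoef : ∀ k, ∃ d, u.coeff k = ((p : ℕ) : ZMod (p^2)) * d := by
    intro k
    refine (red_eq_zero_iff hp _).mp ?_
    rw [← coeff_map, hu, coeff_zero]
  choose d hd using hcoef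
  refine ⟨∑ k ∈ u.support, C (d k) * X ^ k, ?_⟩
  ext m
  rw [natCast_poly_eq_C, coeff_C_mul, finset_sum_coeff]
  simp only [coeff_C_mul, coeff_X_pow, mul_ite, mul_one, mul_zero]
  rw [Finset.sum_ite_eq u.support m d]
  split
  · next => exact hd m
  · next hm =>
    rw [mul_zero]
    exact Polynomial.notMem_support_iff.mp hm

lemma p_mul_poly_eq_zero_iff (u : Polynomial (ZMod (p^2))) :
    ((p : ℕ) : Polynomial (ZMod (p^2))) * u = 0 ↔ u.map (red p) = 0 := by
  rw [natCast_poly_eq_C]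
  constructor
  · intro hu
    ext m
    rw [coeff_map, coeff_zero, ← p_mul_eq_zero_iff hp, ← coeff_C_mul, hu, coeff_zero]
  · intro hu
    ext m
    rw [coeff_C_mul, coeff_zero, p_mul_eq_zero_iff hp, ← coeff_map, hu, coeff_zero]
end polyzmod

section bezout
variable {p n : ℕ} (hp : p.Prime) (hn : 0 < n) (hco : Nat.Coprime n p)

include hp hn hco in
lemma sep_Xn : Separable ((X : (ZMod p)[X])^n - 1) := by
  haveI : Fact p.Prime := ⟨hp⟩
  have hn0 : (n : ZMod p) ≠ 0 := by
    rw [Ne, ZMod.natCast_eq_zero_iff]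
    intro hd
    have h1 := Nat.eq_one_of_dvd_coprimes hco.symm (dvd_refl p) hd
    have h2 := hp.one_lt
    omega
  have hsep := Polynomial.separable_X_pow_sub_C (1 : ZMod p) hn0 one_ne_zero
  rwa [map_one] at hsep

include hp hn hco in
lemma exists_bezout (f h g : Polynomial (ZMod (p^2)))
    (hfac : f * h * g = X ^ n - 1) :
    ∃ U V W : Polynomial (ZMod (p^2)),
      U * h + V * g = 1 + ((p : ℕ) : Polynomial (ZMod (p^2))) * W := by
  haveI : Fact p.Prime := ⟨hp⟩
  have hmapfac : (f.map (red p)) * (h.map (red p)) * (g.map (red p))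
      = (X : (ZMod p)[X])^n - 1 := by
    rw [← Polynomial.map_mul, ← Polynomial.map_mul, hfac]
    simp
  have hsep : ((f.map (red p) * h.map (red p)) * (g.map (red p))).Separable := by
    rw [hmapfac]
    exact sep_Xn hp hn hco
  have hcop : IsCoprime (h.map (red p)) (g.map (red p)) :=
    (hsep.isCoprime).of_mul_left_right
  obtain ⟨ub, vb, huv⟩ := hcop
  have hsurj : Function.Surjective (red p) := by
    intro x
    haveI : NeZero p := ⟨hp.ne_zero⟩
    exact ⟨((x.val : ℕ) : ZMod (p^2)), by
      rw [red, map_natCast]; exact ZMod.natCast_rightInverse x⟩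
  obtain ⟨U, hU⟩ := Polynomial.map_surjective (red p) hsurj ub
  obtain ⟨V, hV⟩ := Polynomial.map_surjective (red p) hsurj vb
  have hker : (U * h + V * g - 1).map (red p) = 0 := by
    rw [Polynomial.map_sub, Polynomial.map_add, Polynomial.map_mul, Polynomial.map_mul,
      hU, hV, Polynomial.map_one, huv, sub_self]
  obtain ⟨W, hW⟩ := exists_of_map_red_zero hp _ hker
  exact ⟨U, V, W, by linear_combination hW⟩
end bezout

lemma field_cancel {F : Type*} [Field F] {m : ℕ} {A s G : F[X]} (hG : G.Monic)
    (hdG : G.natDegree = m) (hA : A.degree < (m : WithBot ℕ)) (hE : A = G * s) :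
    s = 0 ∧ A = 0 := by
  by_cases hs : s = 0
  · exact ⟨hs, by simp [hE, hs]⟩
  · exfalso
    have hd : A.degree = G.degree + s.degree := by rw [hE, degree_mul]
    have hGd : G.degree = (m : WithBot ℕ) := by
      rw [degree_eq_natDegree hG.ne_zero, hdG]
    rw [degree_eq_natDegree hs, hGd] at hd
    have hd2 : A.degree = ((m + s.natDegree : ℕ) : WithBot ℕ) := by
      rw [hd]; push_cast; ring
    rw [hd2] at hA
    have : m + s.natDegree < m := by exact_mod_cast hA
    omega


/-- the cyclic code `C = ⟨fh + pf⟩ ⊆ ℤ_{p²}[x]/(xⁿ-1)` with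
`fhg = xⁿ-1` is isomorphic as an abelian group to
`(ℤ_{p²})^{deg g} × (ℤ_p)^{deg h}`; in particular `|C| = p^{2·deg g + deg h}`. -/
theorem code_type_card (p n : ℕ) (hp : p.Prime) (hn : 0 < n) (hco : Nat.Coprime n p)
    (f h g : Polynomial (ZMod (p ^ 2))) (hf : f.Monic) (hh : h.Monic) (hg : g.Monic)
    (hfac : f * h * g = X ^ n - 1) :
    Nonempty ((Ideal.span {Qmk p n (f * h + (p : Polynomial (ZMod (p ^ 2))) * f)}) ≃+
        ((Fin g.natDegree → ZMod (p ^ 2)) × (Fin h.natDegree → ZMod p))) ∧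
    Nat.card (Ideal.span {Qmk p n (f * h + (p : Polynomial (ZMod (p ^ 2))) * f)})
      = p ^ (2 * g.natDegree + h.natDegree) := by
  classical
  haveI : Fact p.Prime := ⟨hp⟩
  haveI : NeZero p := ⟨hp.ne_zero⟩
  haveI : NeZero (p ^ 2) := ⟨pow_ne_zero 2 hp.ne_zero⟩
  haveI : Fact (1 < p ^ 2) := ⟨by nlinarith [hp.two_le]⟩
  -- p² = 0 as polynomial coefficient
  have hps : ((p : ℕ) : Polynomial (ZMod (p ^ 2))) * ((p : ℕ) : Polynomial (ZMod (p ^ 2))) = 0 := by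
    rw [natCast_poly_eq_C, ← map_mul, psq_cast_zero, map_zero]
  -- the underlying function
  set Φf : ((Fin g.natDegree → ZMod (p ^ 2)) × (Fin h.natDegree → ZMod p)) → (Polynomial (ZMod (p ^ 2)) ⧸ Ideal.span {(X : Polynomial (ZMod (p ^ 2))) ^ n - 1}) := fun ab =>
    Qmk p n (polyOf ab.1 * (f * h) +
      ((p : ℕ) : Polynomial (ZMod (p ^ 2))) * polyOf (fun j => (((ab.2 j).val : ℕ) : ZMod (p ^ 2))) * f) with hΦf
  -- additivity
  have hadd : ∀ x y : ((Fin g.natDegree → ZMod (p ^ 2)) × (Fin h.natDegree → ZMod p)), Φf (x + y) = Φf x + Φf y := by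
    intro x y
    have h1 : polyOf (x.1 + y.1) = polyOf x.1 + polyOf y.1 := polyOf_add _ _
    have h2 : ((p : ℕ) : Polynomial (ZMod (p ^ 2))) * polyOf (fun j => ((((x.2 + y.2) j).val : ℕ) : ZMod (p ^ 2)))
        = ((p : ℕ) : Polynomial (ZMod (p ^ 2))) * polyOf (fun j => (((x.2 j).val : ℕ) : ZMod (p ^ 2)))
          + ((p : ℕ) : Polynomial (ZMod (p ^ 2))) * polyOf (fun j => (((y.2 j).val : ℕ) : ZMod (p ^ 2))) := by
      ext k
      simp only [natCast_poly_eq_C, coeff_add, coeff_C_mul, polyOf_coeff]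
      split
      · next hk =>
        have := pmul_mod hp ((x.2 ⟨k, hk⟩).val + (y.2 ⟨k, hk⟩).val)
        rw [Pi.add_apply, ZMod.val_add]
        push_cast at this ⊢
        rw [this]; ring
      · ring
    show Qmk p n _ = Qmk p n _ + Qmk p n _
    rw [← map_add]
    congr 1
    rw [Prod.fst_add, Prod.snd_add] at *
    rw [h1, h2]
    ring
  -- Bezout coefficients
  obtain ⟨U, V, W, hbez⟩ := exists_bezout hp hn hco f h g hfac
  -- the generators lie in the span
  have hpf : Qmk p n ((p : Polynomial (ZMod (p ^ 2))) * f)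
      = Qmk p n ((V * g + (p : Polynomial (ZMod (p ^ 2))) * U) * (f * h + (p : Polynomial (ZMod (p ^ 2))) * f)) := by
    show Ideal.Quotient.mk _ _ = Ideal.Quotient.mk _ _
    rw [Ideal.Quotient.eq, Ideal.mem_span_singleton]
    exact ⟨-V, by linear_combination (-V) * hfac - (p : Polynomial (ZMod (p ^ 2))) * f * hbez
      + (-(W * f) - U * f) * hps⟩
  have hCmem : Qmk p n (f * h + (p : Polynomial (ZMod (p ^ 2))) * f)
      ∈ Ideal.span {Qmk p n (f * h + (p : Polynomial (ZMod (p ^ 2))) * f)} :=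
    Ideal.mem_span_singleton_self _
  have hpf_mem : Qmk p n ((p : Polynomial (ZMod (p ^ 2))) * f)
      ∈ Ideal.span {Qmk p n (f * h + (p : Polynomial (ZMod (p ^ 2))) * f)} := by
    rw [hpf, map_mul]
    exact Ideal.mul_mem_left _ _ hCmem
  have hfh_mem : Qmk p n (f * h)
      ∈ Ideal.span {Qmk p n (f * h + (p : Polynomial (ZMod (p ^ 2))) * f)} := by
    have : Qmk p n (f * h) = Qmk p n (f * h + (p : Polynomial (ZMod (p ^ 2))) * f)
        - Qmk p n ((p : Polynomial (ZMod (p ^ 2))) * f) := by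
      rw [← map_sub]; congr 1; ring
    rw [this]
    exact Submodule.sub_mem _ hCmem hpf_mem
  -- every value of Φf lies in the span
  have hmemC : ∀ ab : ((Fin g.natDegree → ZMod (p ^ 2)) × (Fin h.natDegree → ZMod p)),
      Φf ab ∈ Ideal.span {Qmk p n (f * h + (p : Polynomial (ZMod (p ^ 2))) * f)} := by
    intro ab
    show Qmk p n _ ∈ _
    have hrw : polyOf ab.1 * (f * h) +
        ((p : ℕ) : Polynomial (ZMod (p ^ 2))) * polyOf (fun j => (((ab.2 j).val : ℕ) : ZMod (p ^ 2))) * f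
        = polyOf ab.1 * (f * h) +
          polyOf (fun j => (((ab.2 j).val : ℕ) : ZMod (p ^ 2))) * ((p : Polynomial (ZMod (p ^ 2))) * f) := by
      ring
    have hsplit : Qmk p n (polyOf ab.1 * (f * h) +
        polyOf (fun j => (((ab.2 j).val : ℕ) : ZMod (p ^ 2))) * ((p : Polynomial (ZMod (p ^ 2))) * f))
        = Qmk p n (polyOf ab.1) * Qmk p n (f * h) +
          Qmk p n (polyOf (fun j => (((ab.2 j).val : ℕ) : ZMod (p ^ 2)))) *
            Qmk p n ((p : Polynomial (ZMod (p ^ 2))) * f) := by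
      simp only [map_add, map_mul]
    rw [hrw, hsplit]
    exact Submodule.add_mem _ (Ideal.mul_mem_left _ _ hfh_mem) (Ideal.mul_mem_left _ _ hpf_mem)
  -- every element of the span is a value of Φf
  have hrange : ∀ x ∈ Ideal.span {Qmk p n (f * h + (p : Polynomial (ZMod (p ^ 2))) * f)},
      ∃ ab : ((Fin g.natDegree → ZMod (p ^ 2)) × (Fin h.natDegree → ZMod p)), Φf ab = x := by
    intro x hx
    rw [Ideal.mem_span_singleton] at hx
    obtain ⟨y, hy⟩ := hx
    obtain ⟨r, rfl⟩ := Ideal.Quotient.mk_surjective y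
    refine ⟨⟨fun i => (r %ₘ g + (p : Polynomial (ZMod (p ^ 2))) * (r /ₘ h %ₘ g)).coeff (i : ℕ),
        fun j => red p ((r %ₘ h).coeff (j : ℕ))⟩, ?_⟩
    have hdegg : g.degree = (g.natDegree : WithBot ℕ) := degree_eq_natDegree hg.ne_zero
    have hdegh : h.degree = (h.natDegree : WithBot ℕ) := degree_eq_natDegree hh.ne_zero
    have hA : polyOf (fun i : Fin g.natDegree =>
        (r %ₘ g + (p : Polynomial (ZMod (p ^ 2))) * (r /ₘ h %ₘ g)).coeff (i : ℕ))
        = r %ₘ g + (p : Polynomial (ZMod (p ^ 2))) * (r /ₘ h %ₘ g) := by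
      apply polyOf_eq_self
      apply lt_of_le_of_lt (degree_add_le _ _)
      apply max_lt
      · rw [← hdegg]; exact degree_modByMonic_lt _ hg
      · apply lt_of_le_of_lt (degree_mul_le _ _)
        have h1 : ((p : ℕ) : Polynomial (ZMod (p ^ 2))).degree ≤ 0 := by
          rw [natCast_poly_eq_C]; exact degree_C_le
        calc ((p : ℕ) : Polynomial (ZMod (p ^ 2))).degree + (r /ₘ h %ₘ g).degree
            ≤ 0 + (r /ₘ h %ₘ g).degree := add_le_add_left h1 _
          _ = (r /ₘ h %ₘ g).degree := zero_add _
          _ < (g.natDegree : WithBot ℕ) := by rw [← hdegg]; exact degree_modByMonic_lt _ hg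
    have hB : ((p : ℕ) : Polynomial (ZMod (p ^ 2))) * polyOf (fun j : Fin h.natDegree =>
          (((red p ((r %ₘ h).coeff (j : ℕ))).val : ℕ) : ZMod (p ^ 2)))
        = ((p : ℕ) : Polynomial (ZMod (p ^ 2))) * (r %ₘ h) := by
      ext k
      rw [natCast_poly_eq_C, coeff_C_mul, coeff_C_mul, polyOf_coeff]
      split
      · next hk =>
        have hredval : (red p ((r %ₘ h).coeff k)).val = ((r %ₘ h).coeff k).val % p := by
          rw [red, ZMod.castHom_apply, ← ZMod.natCast_val, ZMod.val_natCast]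
        rw [hredval, pmul_mod hp, ZMod.natCast_val, ZMod.cast_id', id_eq]
      · next hk =>
        have : (r %ₘ h).coeff k = 0 := by
          apply coeff_eq_zero_of_degree_lt
          apply lt_of_lt_of_le (lt_of_lt_of_le (degree_modByMonic_lt _ hh) (le_of_eq hdegh))
          exact_mod_cast Nat.le_of_not_lt hk
        rw [this, mul_zero]
    show Qmk p n _ = _
    rw [hy, hA, hB]
    show Ideal.Quotient.mk _ _ =
      Ideal.Quotient.mk (Ideal.span {(X : Polynomial (ZMod (p ^ 2))) ^ n - 1})
        (f * h + (p : Polynomial (ZMod (p ^ 2))) * f) * Ideal.Quotient.mk _ r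
    rw [← map_mul, Ideal.Quotient.eq, Ideal.mem_span_singleton]
    have hr1 : r %ₘ g + g * (r /ₘ g) = r := modByMonic_add_div r g
    have hr2 : r %ₘ h + h * (r /ₘ h) = r := modByMonic_add_div r h
    have hr3 : (r /ₘ h) %ₘ g + g * ((r /ₘ h) /ₘ g) = r /ₘ h := modByMonic_add_div _ g
    exact ⟨-(r /ₘ g + (p : Polynomial (ZMod (p ^ 2))) * ((r /ₘ h) /ₘ g)),
      by linear_combination (f * h) * hr1 + ((p : Polynomial (ZMod (p ^ 2))) * f) * hr2
        + ((p : Polynomial (ZMod (p ^ 2))) * f * h) * hr3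
        - (r /ₘ g + (p : Polynomial (ZMod (p ^ 2))) * ((r /ₘ h) /ₘ g)) * hfac⟩
  -- injectivity
  have hinj : ∀ ab : ((Fin g.natDegree → ZMod (p ^ 2)) × (Fin h.natDegree → ZMod p)),
      Φf ab = 0 → ab = 0 := by
    rintro ⟨a, b⟩ h0
    have h0' : polyOf a * (f * h) +
        ((p : ℕ) : Polynomial (ZMod (p ^ 2))) * polyOf (fun j => (((b j).val : ℕ) : ZMod (p ^ 2))) * f
        ∈ Ideal.span {(X : Polynomial (ZMod (p ^ 2))) ^ n - 1} :=
      Ideal.Quotient.eq_zero_iff_mem.mp h0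
    rw [Ideal.mem_span_singleton] at h0'
    obtain ⟨q, hq⟩ := h0'
    -- cancel the monic factor f
    have hE : polyOf a * h + ((p : ℕ) : Polynomial (ZMod (p ^ 2))) *
        polyOf (fun j => (((b j).val : ℕ) : ZMod (p ^ 2))) = h * g * q := by
      apply hf.isRegular.left
      show f * _ = f * _
      linear_combination hq - q * hfac
    -- reduce mod p
    have hE1 : (polyOf a).map (red p) * h.map (red p)
        = h.map (red p) * (g.map (red p) * q.map (red p)) := by
      have := congrArg (Polynomial.map (red p)) hE
      simp only [Polynomial.map_add, Polynomial.map_mul, Polynomial.map_natCast,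
        CharP.cast_eq_zero, zero_mul, add_zero] at this
      rw [this]; ring
    have hcan : (polyOf a).map (red p) = g.map (red p) * q.map (red p) :=
      mul_left_cancel₀ (hh.map (red p)).ne_zero (by rw [← hE1]; ring)
    have hdegA : ((polyOf a).map (red p)).degree < (g.natDegree : WithBot ℕ) := by
      rw [polyOf_map]; exact polyOf_degree_lt _
    obtain ⟨hq0, hA0⟩ := field_cancel (hg.map (red p)) (hg.natDegree_map (red p)) hdegA hcan
    -- coefficients of a are divisible by p
    have ha1 : ∀ i : Fin g.natDegree, ∃ d, a i = ((p : ℕ) : ZMod (p ^ 2)) * d := by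
      intro i
      apply (red_eq_zero_iff hp _).mp
      have hco := congrArg (fun u => u.coeff (i : ℕ)) hA0
      rw [polyOf_map] at hco
      simpa [polyOf_coeff, i.isLt] using hco
    choose d hd using ha1
    have hApd : polyOf a = ((p : ℕ) : Polynomial (ZMod (p ^ 2))) * polyOf d := by
      ext k
      rw [natCast_poly_eq_C, coeff_C_mul, polyOf_coeff, polyOf_coeff]
      split
      · next hk => exact hd _
      · rw [mul_zero]
    obtain ⟨q2, hq2⟩ := exists_of_map_red_zero hp q hq0
    -- second level equation
    rw [hApd, hq2] at hE
    have hE2 : ((p : ℕ) : Polynomial (ZMod (p ^ 2))) *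
        (polyOf d * h + polyOf (fun j => (((b j).val : ℕ) : ZMod (p ^ 2))) - h * g * q2) = 0 := by
      linear_combination hE
    have hmap2 : (polyOf d * h + polyOf (fun j => (((b j).val : ℕ) : ZMod (p ^ 2))) - h * g * q2).map (red p)
        = 0 := (p_mul_poly_eq_zero_iff hp _).mp hE2
    have hπB : (polyOf (fun j => (((b j).val : ℕ) : ZMod (p ^ 2)))).map (red p) = polyOf b := by
      rw [polyOf_map]
      congr 1
      funext j
      rw [red, map_natCast]
      exact ZMod.natCast_rightInverse (b j)
    have hE3 : polyOf b
        = h.map (red p) * (g.map (red p) * q2.map (red p) - (polyOf d).map (red p)) := by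
      simp only [Polynomial.map_add, Polynomial.map_sub, Polynomial.map_mul, hπB] at hmap2
      linear_combination hmap2
    obtain ⟨hs0, hB0⟩ := field_cancel (hh.map (red p)) (hh.natDegree_map (red p))
      (polyOf_degree_lt b) hE3
    have hcan2 : (polyOf d).map (red p) = g.map (red p) * q2.map (red p) := by
      linear_combination -hs0
    have hdegD : ((polyOf d).map (red p)).degree < (g.natDegree : WithBot ℕ) := by
      rw [polyOf_map]; exact polyOf_degree_lt _
    obtain ⟨hq20, hD0⟩ := field_cancel (hg.map (red p)) (hg.natDegree_map (red p)) hdegD hcan2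
    -- conclude a = 0 and b = 0
    have hahb : a = 0 ∧ b = 0 := by
      constructor
      · funext i
        have hdi : red p (d i) = 0 := by
          have hco2 := congrArg (fun u => u.coeff (i : ℕ)) hD0
          rw [polyOf_map] at hco2
          simpa [polyOf_coeff, i.isLt] using hco2
        obtain ⟨e, he⟩ := (red_eq_zero_iff hp _).mp hdi
        rw [Pi.zero_apply, hd i, he, ← mul_assoc, psq_cast_zero, zero_mul]
      · funext j
        have hco3 := congrArg (fun u => u.coeff (j : ℕ)) hB0
        simpa [polyOf_coeff, j.isLt] using hco3
    rw [Prod.ext_iff]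
    exact ⟨hahb.1, hahb.2⟩
  -- assemble the additive equivalence
  let Φ' : ((Fin g.natDegree → ZMod (p ^ 2)) × (Fin h.natDegree → ZMod p)) →+
      (Ideal.span {Qmk p n (f * h + (p : Polynomial (ZMod (p ^ 2))) * f)}) :=
    AddMonoidHom.mk' (fun ab => ⟨Φf ab, hmemC ab⟩) (fun x y => Subtype.ext (hadd x y))
  have hbij : Function.Bijective Φ' := by
    constructor
    · rw [injective_iff_map_eq_zero]
      intro ab hab
      exact hinj ab (congrArg Subtype.val hab)
    · rintro ⟨x, hx⟩
      obtain ⟨ab, hab⟩ := hrange x hx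
      exact ⟨ab, Subtype.ext hab⟩
  let e := AddEquiv.ofBijective Φ' hbij
  refine ⟨⟨e.symm⟩, ?_⟩
  have hcard : Nat.card (Ideal.span {Qmk p n (f * h + (p : Polynomial (ZMod (p ^ 2))) * f)})
      = Nat.card ((Fin g.natDegree → ZMod (p ^ 2)) × (Fin h.natDegree → ZMod p)) :=
    Nat.card_congr e.symm.toEquiv
  rw [hcard, Nat.card_prod]
  have h1 : Nat.card (Fin g.natDegree → ZMod (p ^ 2)) = (p ^ 2) ^ g.natDegree := by
    simp [Nat.card_fun, Nat.card_zmod]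
  have h2 : Nat.card (Fin h.natDegree → ZMod p) = p ^ h.natDegree := by
    simp [Nat.card_fun, Nat.card_zmod]
  rw [h1, h2, ← pow_mul, ← pow_add]
end

section
/- Let p be an odd prime and 𝒞 ≤ ℤ_p^α × ℤ_{p²}^β a ℤ_p ℤ_{p²}-additive cyclic code. Define ℛ(𝒞) = { v ∈ ℤ_p^α × ℤ_{p²}^β : Φ(v) ∈ span_{ℤ_p}(Φ(𝒞)) }. Then ℛ(𝒞) is the subgroup generated by 𝒞 together with { p·P(w₁,w₂) : w₁, w₂ ∈ 𝒞 }, and ℛ(𝒞) is closed under the simultaneous cyclic shift π; i.e., ℛ(𝒞) is a ℤ_p ℤ_{p²}-additive cyclic code. -/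
namespace SPC

variable {p α β : ℕ}

/-! ### Basic value arithmetic -/

lemma val_add_mod (hp : p.Prime) (a b : ZMod (p ^ 2)) :
    (a + b).val % p = (a.val % p + b.val % p) % p := by
  haveI : NeZero (p ^ 2) := ⟨pow_ne_zero _ hp.pos.ne'⟩
  rw [ZMod.val_add, Nat.mod_mod_of_dvd _ (dvd_pow_self p two_ne_zero), Nat.add_mod]

lemma carry_eq_div (hp : p.Prime) (a b : ZMod (p ^ 2)) :
    (a.val % p + b.val % p) / p = carry p a b := by
  have h1 : a.val % p < p := Nat.mod_lt _ hp.pos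
  have h2 : b.val % p < p := Nat.mod_lt _ hp.pos
  unfold carry
  split_ifs with h
  · rw [show a.val % p + b.val % p = (a.val % p + b.val % p - p) + p by omega,
      Nat.add_div_right _ hp.pos, Nat.div_eq_of_lt (by omega)]
  · exact Nat.div_eq_of_lt (by omega)

lemma val_add_div (hp : p.Prime) (a b : ZMod (p ^ 2)) :
    (((a + b).val / p : ℕ) : ZMod p)
      = ((a.val / p : ℕ) : ZMod p) + ((b.val / p : ℕ) : ZMod p) + (carry p a b : ZMod p) := by
  haveI : NeZero (p ^ 2) := ⟨pow_ne_zero _ hp.pos.ne'⟩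
  set A := a.val with hA
  set B := b.val with hB
  have hlA : A < p ^ 2 := ZMod.val_lt a
  have hlB : B < p ^ 2 := ZMod.val_lt b
  have hval : (a + b).val = (A + B) % p ^ 2 := ZMod.val_add a b
  have key : (((A + B) % p ^ 2) / p : ℕ) = ((A + B) / p : ℕ) ∨
      ((((A + B) % p ^ 2) / p : ℕ) = ((A + B) / p : ℕ) - p ∧ p ≤ (A + B) / p) := by
    rcases lt_or_ge (A + B) (p ^ 2) with h | h
    · left; rw [Nat.mod_eq_of_lt h]
    · right
      have hmod : (A + B) % p ^ 2 = A + B - p ^ 2 := by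
        rw [Nat.mod_eq_sub_mod h, Nat.mod_eq_of_lt (by omega)]
      constructor
      · rw [hmod, show p ^ 2 = p * p by ring, Nat.sub_mul_div _ _ _]
      · have := Nat.div_le_div_right (c := p) h
        rwa [show p ^ 2 = p * p by ring, Nat.mul_div_cancel_left p hp.pos] at this
  have hsplit : (A + B) / p = A / p + B / p + (A % p + B % p) / p := by
    have e : A + B = (A % p + B % p) + p * (A / p + B / p) := by
      rw [Nat.mul_add]
      have := Nat.div_add_mod A p; have := Nat.div_add_mod B p; omega
    rw [e, Nat.add_mul_div_left _ _ hp.pos]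
    omega
  have hc : (A % p + B % p) / p = carry p a b := carry_eq_div hp a b
  rw [hval]
  rcases key with h | ⟨h, hge⟩
  · rw [h, hsplit, hc]; push_cast; ring
  · rw [h, Nat.cast_sub hge, hsplit, hc]
    push_cast
    simp only [ZMod.natCast_self, sub_zero]

/-! ### Gray map facts -/

lemma gray_zero (hp : p.Prime) : gray p (0 : ZMod (p ^ 2)) = 0 := by
  haveI : NeZero (p ^ 2) := ⟨pow_ne_zero _ hp.pos.ne'⟩
  funext i
  simp [gray, ZMod.val_zero]

lemma carry_le_one (p : ℕ) (a b : ZMod (p ^ 2)) : carry p a b ≤ 1 := by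
  unfold carry; split <;> simp

lemma val_pcast (hp : p.Prime) (c : ℕ) (hc : c ≤ 1) :
    ((p * c : ℕ) : ZMod (p ^ 2)).val = p * c := by
  haveI : NeZero (p ^ 2) := ⟨pow_ne_zero _ hp.pos.ne'⟩
  apply ZMod.val_natCast_of_lt
  have h1 : p * c ≤ p := by nlinarith
  have h2 : p < p ^ 2 := by nlinarith [hp.two_le]
  omega

lemma gray_pcarry (hp : p.Prime) (a b : ZMod (p ^ 2)) (i : Fin p) :
    gray p ((p * carry p a b : ℕ) : ZMod (p ^ 2)) i = (carry p a b : ZMod p) := by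
  unfold gray
  rw [val_pcast hp _ (carry_le_one p a b), Nat.mul_div_cancel_left _ hp.pos,
    Nat.mul_mod_right]
  simp

lemma gray_add (hp : p.Prime) (a b : ZMod (p ^ 2)) (i : Fin p) :
    gray p (a + b) i = gray p a i + gray p b i + (carry p a b : ZMod p) := by
  unfold gray
  rw [val_add_div hp, val_add_mod hp]
  rw [ZMod.natCast_mod]
  push_cast
  ring

lemma gray_inj (hp : p.Prime) {a b : ZMod (p ^ 2)} (h : gray p a = gray p b) : a = b := by
  haveI : NeZero (p ^ 2) := ⟨pow_ne_zero _ hp.pos.ne'⟩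
  have h0 := congrFun h ⟨0, hp.pos⟩
  have h1 := congrFun h ⟨1, hp.one_lt⟩
  simp only [gray, Fin.val_mk, Nat.cast_zero, mul_zero, add_zero, Nat.cast_one,
    mul_one] at h0 h1
  rw [h0] at h1
  have h1' : ((a.val % p : ℕ) : ZMod p) = ((b.val % p : ℕ) : ZMod p) := add_left_cancel h1
  have hda : a.val / p < p := Nat.div_lt_of_lt_mul (by rw [← pow_two]; exact ZMod.val_lt a)
  have hdb : b.val / p < p := Nat.div_lt_of_lt_mul (by rw [← pow_two]; exact ZMod.val_lt b)
  have e0 : a.val / p = b.val / p := by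
    have := congrArg ZMod.val h0
    rwa [ZMod.val_natCast_of_lt hda, ZMod.val_natCast_of_lt hdb] at this
  have e1 : a.val % p = b.val % p := by
    have := congrArg ZMod.val h1'
    rwa [ZMod.val_natCast_of_lt (Nat.mod_lt _ hp.pos),
      ZMod.val_natCast_of_lt (Nat.mod_lt _ hp.pos)] at this
  apply ZMod.val_injective
  have ha := Nat.div_add_mod a.val p
  have hb := Nat.div_add_mod b.val p
  rw [e0, e1] at ha
  omega

/-! ### Extended Gray map facts -/

lemma grayExt_zero (hp : p.Prime) : grayExt (0 : Amb p α β) = 0 := by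
  funext x
  cases x with
  | inl a => rfl
  | inr x => show gray p 0 x.2 = 0; rw [gray_zero hp]; rfl

lemma grayExt_add (hp : p.Prime) (u v : Amb p α β) :
    grayExt (u + v) = grayExt u + grayExt v + grayExt (carryVec u v) := by
  funext x
  cases x with
  | inl a =>
    show (u.1 + v.1) a = u.1 a + v.1 a + (0 : Fin α → ZMod p) a
    simp
  | inr x =>
    show gray p (u.2 x.1 + v.2 x.1) x.2 = _ + gray p ((carryVec u v).2 x.1) x.2
    rw [gray_add hp]
    show _ = _ + gray p ((p * carry p (u.2 x.1) (v.2 x.1) : ℕ) : ZMod (p ^ 2)) x.2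
    rw [gray_pcarry hp]
    rfl

lemma grayExt_inj (hp : p.Prime) {u v : Amb p α β} (h : grayExt u = grayExt v) : u = v := by
  have h1 : u.1 = v.1 := funext fun a => congrFun h (Sum.inl a)
  have h2 : u.2 = v.2 := by
    funext j
    exact gray_inj hp (funext fun i => congrFun h (Sum.inr ⟨j, i⟩))
  exact Prod.ext h1 h2

/-! ### The order-p part -/

/-- Vectors whose second-block coordinates are divisible by `p`. -/
def Pgrp (hp : p.Prime) (α β : ℕ) : AddSubgroup (Amb p α β) where
  carrier := {z | ∀ j, (z.2 j).val % p = 0}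
  zero_mem' := by
    intro j
    haveI : NeZero (p ^ 2) := ⟨pow_ne_zero _ hp.pos.ne'⟩
    show ((0 : ZMod (p ^ 2)).val) % p = 0
    rw [ZMod.val_zero, Nat.zero_mod]
  add_mem' := by
    intro x y hx hy j
    rw [show (x + y).2 j = x.2 j + y.2 j from rfl, val_add_mod hp, hx j, hy j]
    rfl
  neg_mem' := by
    intro z hz j
    have h0 : ((-z + z).2 j).val % p = 0 := by
      haveI : NeZero (p ^ 2) := ⟨pow_ne_zero _ hp.pos.ne'⟩
      simp [ZMod.val_zero]
    rw [show (-z + z).2 j = (-z).2 j + z.2 j from rfl, val_add_mod hp, hz j,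
      Nat.add_zero, Nat.mod_mod_of_dvd _ dvd_rfl] at h0
    exact h0

lemma valmod_of_sub_pgrp (hp : p.Prime) {d c : Amb p α β} (h : d - c ∈ Pgrp hp α β) (j : Fin β) :
    (d.2 j).val % p = (c.2 j).val % p := by
  have hd : d = c + (d - c) := by abel
  have hj := h j
  calc (d.2 j).val % p = ((c + (d - c)).2 j).val % p := by rw [← hd]
    _ = (c.2 j).val % p := by
        rw [show (c + (d - c)).2 j = c.2 j + (d - c).2 j from rfl, val_add_mod hp, hj,
          Nat.add_zero, Nat.mod_mod_of_dvd _ dvd_rfl]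

lemma carry_congr (p : ℕ) {a a' b b' : ZMod (p ^ 2)} (ha : a.val % p = a'.val % p)
    (hb : b.val % p = b'.val % p) : carry p a b = carry p a' b' := by
  unfold carry; rw [ha, hb]

lemma carryVec_congr (hp : p.Prime) {d d' c c' : Amb p α β}
    (h : d - c ∈ Pgrp hp α β) (h' : d' - c' ∈ Pgrp hp α β) :
    carryVec d d' = carryVec c c' := by
  unfold carryVec
  refine Prod.ext rfl ?_
  funext j
  show ((p * carry p (d.2 j) (d'.2 j) : ℕ) : ZMod (p ^ 2))
    = ((p * carry p (c.2 j) (c'.2 j) : ℕ) : ZMod (p ^ 2))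
  rw [carry_congr p (valmod_of_sub_pgrp hp h j) (valmod_of_sub_pgrp hp h' j)]

lemma carryVec_mem_pgrp (hp : p.Prime) (u v : Amb p α β) : carryVec u v ∈ Pgrp hp α β := by
  intro j
  show (((p * carry p (u.2 j) (v.2 j) : ℕ) : ZMod (p ^ 2)).val) % p = 0
  rw [val_pcast hp _ (carry_le_one p _ _), Nat.mul_mod_right]

lemma carryVec_eq_zero (hp : p.Prime) (x : Amb p α β) {z : Amb p α β} (hz : z ∈ Pgrp hp α β) :
    carryVec x z = 0 := by
  unfold carryVec
  refine Prod.ext rfl ?_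
  funext j
  have hc : carry p (x.2 j) (z.2 j) = 0 := by
    unfold carry
    have h1 : (x.2 j).val % p < p := Nat.mod_lt _ hp.pos
    have h2 := hz j
    split_ifs with h
    · omega
    · rfl
  show ((p * carry p (x.2 j) (z.2 j) : ℕ) : ZMod (p ^ 2)) = (0 : Amb p α β).2 j
  rw [hc]
  simp

lemma grayExt_add_pgrp (hp : p.Prime) (x : Amb p α β) {z : Amb p α β} (hz : z ∈ Pgrp hp α β) :
    grayExt (x + z) = grayExt x + grayExt z := by
  rw [grayExt_add hp, carryVec_eq_zero hp x hz, grayExt_zero hp, add_zero]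

lemma grayExt_neg_pgrp (hp : p.Prime) {z : Amb p α β} (hz : z ∈ Pgrp hp α β) :
    grayExt (-z) = -grayExt z := by
  have h0 : grayExt (z + (-z)) = grayExt z + grayExt (-z) := grayExt_add_pgrp hp z (neg_mem hz)
  rw [add_neg_cancel, grayExt_zero hp] at h0
  exact eq_neg_of_add_eq_zero_right h0.symm

end SPC

namespace SPC

variable {p α β : ℕ}

lemma shiftAmb_add (u v : Amb p α β) : shiftAmb (u + v) = shiftAmb u + shiftAmb v := rfl

lemma shiftAmb_neg (u : Amb p α β) : shiftAmb (-u) = -shiftAmb u := rfl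

lemma shiftAmb_zero : shiftAmb (0 : Amb p α β) = 0 := rfl

lemma shiftAmb_carryVec (u v : Amb p α β) :
    shiftAmb (carryVec u v) = carryVec (shiftAmb u) (shiftAmb v) := rfl

variable (hp : p.Prime) (C : AddSubgroup (Amb p α β))

include hp

/-- The subgroup generated by the code together with the carry vectors. -/
abbrev Dgrp : AddSubgroup (Amb p α β) :=
  AddSubgroup.closure ((C : Set (Amb p α β)) ∪
    {x : Amb p α β | ∃ w₁ ∈ C, ∃ w₂ ∈ C, x = carryVec w₁ w₂})

lemma decomp : ∀ d ∈ Dgrp C, ∃ c ∈ C, d - c ∈ Pgrp hp α β := by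
  intro d hd2
  induction hd2 using AddSubgroup.closure_induction with
  | mem x hx =>
    rcases hx with hx | ⟨w₁, h₁, w₂, h₂, rfl⟩
    · exact ⟨x, hx, by rw [sub_self]; exact zero_mem _⟩
    · exact ⟨0, zero_mem C, by rw [sub_zero]; exact carryVec_mem_pgrp hp w₁ w₂⟩
  | zero => exact ⟨0, zero_mem C, by rw [sub_zero]; exact zero_mem _⟩
  | add x y hx hy ihx ihy =>
    obtain ⟨c, hc, hxc⟩ := ihx
    obtain ⟨c', hc', hyc⟩ := ihy
    refine ⟨c + c', add_mem hc hc', ?_⟩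
    have := add_mem hxc hyc
    convert this using 1
    abel
  | neg x hx ihx =>
    obtain ⟨c, hc, hxc⟩ := ihx
    refine ⟨-c, neg_mem hc, ?_⟩
    have := neg_mem hxc
    convert this using 1
    abel

lemma carryVec_mem_Dgrp {d d' : Amb p α β} (hd : d ∈ Dgrp C) (hd' : d' ∈ Dgrp C) :
    carryVec d d' ∈ Dgrp C := by
  obtain ⟨c, hc, hdc⟩ := decomp hp C d hd
  obtain ⟨c', hc', hd'c⟩ := decomp hp C d' hd'
  rw [carryVec_congr hp hdc hd'c]
  exact AddSubgroup.subset_closure (Or.inr ⟨c, hc, c', hc', rfl⟩)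

lemma grayExt_carryVec_mem_span {d d' : Amb p α β} (hd : d ∈ Dgrp C) (hd' : d' ∈ Dgrp C) :
    grayExt (carryVec d d') ∈ Submodule.span (ZMod p) (grayExt '' (C : Set (Amb p α β))) := by
  obtain ⟨c, hc, hdc⟩ := decomp hp C d hd
  obtain ⟨c', hc', hd'c⟩ := decomp hp C d' hd'
  rw [carryVec_congr hp hdc hd'c]
  have key : grayExt (carryVec c c') = grayExt (c + c') - grayExt c - grayExt c' := by
    have h := grayExt_add hp c c'
    linear_combination -h
  rw [key]
  exact sub_mem (sub_mem (Submodule.subset_span ⟨c + c', add_mem hc hc', rfl⟩)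
    (Submodule.subset_span ⟨c, hc, rfl⟩)) (Submodule.subset_span ⟨c', hc', rfl⟩)

lemma image_sub_span : ∀ d ∈ Dgrp C,
    grayExt d ∈ Submodule.span (ZMod p) (grayExt '' (C : Set (Amb p α β))) := by
  intro d hd
  induction hd using AddSubgroup.closure_induction with
  | mem x hx =>
    rcases hx with hx | ⟨w₁, h₁, w₂, h₂, rfl⟩
    · exact Submodule.subset_span ⟨x, hx, rfl⟩
    · exact grayExt_carryVec_mem_span hp C
        (AddSubgroup.subset_closure (Or.inl h₁)) (AddSubgroup.subset_closure (Or.inl h₂))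
  | zero => rw [grayExt_zero hp]; exact zero_mem _
  | add x y hx hy ihx ihy =>
    rw [grayExt_add hp]
    exact add_mem (add_mem ihx ihy) (grayExt_carryVec_mem_span hp C hx hy)
  | neg x hx ihx =>
    have h0 := grayExt_add hp x (-x)
    rw [add_neg_cancel, grayExt_zero hp] at h0
    have key : grayExt (-x) = -grayExt x - grayExt (carryVec x (-x)) := by
      linear_combination -h0
    rw [key]
    exact sub_mem (neg_mem ihx) (grayExt_carryVec_mem_span hp C hx (neg_mem hx))

lemma imageAdd {d d' : Amb p α β} (hd : d ∈ Dgrp C) (hd' : d' ∈ Dgrp C) :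
    ∃ e ∈ Dgrp C, grayExt e = grayExt d + grayExt d' := by
  set cv := carryVec d d' with hcv
  have hcvp : cv ∈ Pgrp hp α β := carryVec_mem_pgrp hp d d'
  have hcvD : cv ∈ Dgrp C := carryVec_mem_Dgrp hp C hd hd'
  refine ⟨(d + d') + (-cv), add_mem (add_mem hd hd') (neg_mem hcvD), ?_⟩
  rw [grayExt_add_pgrp hp (d + d') (neg_mem hcvp), grayExt_add hp, grayExt_neg_pgrp hp hcvp]
  abel

lemma span_sub_image : ∀ v ∈ Submodule.span (ZMod p) (grayExt '' (C : Set (Amb p α β))),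
    ∃ d ∈ Dgrp C, grayExt d = v := by
  haveI : NeZero p := ⟨hp.pos.ne'⟩
  intro v hv
  induction hv using Submodule.span_induction with
  | mem x hx =>
    obtain ⟨c, hc, rfl⟩ := hx
    exact ⟨c, AddSubgroup.subset_closure (Or.inl hc), rfl⟩
  | zero => exact ⟨0, zero_mem _, grayExt_zero hp⟩
  | add x y hx hy ihx ihy =>
    obtain ⟨dx, hdx, rfl⟩ := ihx
    obtain ⟨dy, hdy, rfl⟩ := ihy
    exact imageAdd hp C hdx hdy
  | smul a x hx ihx =>
    obtain ⟨d, hd, rfl⟩ := ihx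
    have hsm : a • grayExt d = a.val • grayExt d := by
      rw [← Nat.cast_smul_eq_nsmul (ZMod p), ZMod.natCast_val, ZMod.cast_id]
    rw [hsm]
    clear hsm hx
    induction a.val with
    | zero => exact ⟨0, zero_mem _, by rw [grayExt_zero hp, zero_smul]⟩
    | succ n ihn =>
      obtain ⟨e, he, hee⟩ := ihn
      obtain ⟨f, hf, hff⟩ := imageAdd hp C he hd
      exact ⟨f, hf, by rw [hff, hee, succ_nsmul]⟩

lemma Dgrp_shift (hcyc : ∀ u ∈ C, shiftAmb u ∈ C) :
    ∀ d ∈ Dgrp C, shiftAmb d ∈ Dgrp C := by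
  intro d hd
  induction hd using AddSubgroup.closure_induction with
  | mem x hx =>
    rcases hx with hx | ⟨w₁, h₁, w₂, h₂, rfl⟩
    · exact AddSubgroup.subset_closure (Or.inl (hcyc x hx))
    · rw [shiftAmb_carryVec]
      exact AddSubgroup.subset_closure
        (Or.inr ⟨shiftAmb w₁, hcyc w₁ h₁, shiftAmb w₂, hcyc w₂ h₂, rfl⟩)
  | zero => rw [shiftAmb_zero]; exact zero_mem _
  | add x y hx hy ihx ihy => rw [shiftAmb_add]; exact add_mem ihx ihy
  | neg x hx ihx => rw [shiftAmb_neg]; exact neg_mem ihx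

end SPC

/-- `ℛ(𝒞) = { v : Φ(v) ∈ span Φ(𝒞) }` equals the subgroup generated
by `𝒞` and the carry vectors, and `ℛ(𝒞)` is closed under the cyclic shift `π`. -/
theorem span_preimage_cyclic (p α β : ℕ) (hp : p.Prime) (hodd : Odd p)
    (C : AddSubgroup (Amb p α β)) (hcyc : ∀ u ∈ C, shiftAmb u ∈ C) :
    {v : Amb p α β | grayExt v ∈ Submodule.span (ZMod p) (grayExt '' (C : Set (Amb p α β)))}
      = ↑(AddSubgroup.closure ((C : Set (Amb p α β)) ∪
          {x : Amb p α β | ∃ w₁ ∈ C, ∃ w₂ ∈ C, x = carryVec w₁ w₂})) ∧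
    ∀ u : Amb p α β,
      grayExt u ∈ Submodule.span (ZMod p) (grayExt '' (C : Set (Amb p α β))) →
      grayExt (shiftAmb u) ∈ Submodule.span (ZMod p) (grayExt '' (C : Set (Amb p α β))) := by
  constructor
  · ext v
    simp only [Set.mem_setOf_eq, SetLike.mem_coe]
    constructor
    · intro hv
      obtain ⟨d, hd, he⟩ := SPC.span_sub_image hp C _ hv
      exact SPC.grayExt_inj hp he ▸ hd
    · intro hv
      exact SPC.image_sub_span hp C v hv
  · intro u hu
    obtain ⟨d, hd, he⟩ := SPC.span_sub_image hp C _ hu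
    have hu' : u ∈ SPC.Dgrp C := SPC.grayExt_inj hp he ▸ hd
    exact SPC.image_sub_span hp C _ (SPC.Dgrp_shift hp C hcyc u hu')
end

section
/- Let p be a prime and a, b ∈ {0,...,p-1}. Define f(a,b) = Σ_{k=1}^{p-1} Σ_{j=p-k}^{p-1} [ Π_{m=0}^{p-1} (a-m)(b-m) ] / [ (a-k)(b-j) ], computed in ℤ_p (each summand is a product of the linear factors (a-m) for m ≠ k and (b-m) for m ≠ j). Then f(a,b) = 1 in ℤ_p if a + b ≥ p, and f(a,b) = 0 if a + b < p. -/
lemma prod_nonzero_zmod (p : ℕ) [Fact p.Prime] :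
    ∏ x ∈ (Finset.univ : Finset (ZMod p)).erase 0, x = -1 := by
  have h := FiniteField.prod_univ_units_id_eq_neg_one (K := ZMod p)
  have h2 : ((∏ u : (ZMod p)ˣ, u : (ZMod p)ˣ) : ZMod p)
      = ∏ x ∈ (Finset.univ : Finset (ZMod p)).erase 0, x := by
    push_cast
    refine Finset.prod_bij (fun u _ => (u : ZMod p)) ?_ ?_ ?_ ?_
    · intro u _; simp [Finset.mem_erase, u.ne_zero]
    · intro u _ v _ hh; exact Units.ext hh
    · intro x hx
      simp only [Finset.mem_erase, Finset.mem_univ, and_true] at hx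
      exact ⟨Units.mk0 x hx, Finset.mem_univ _, rfl⟩
    · intros; rfl
  rw [← h2, h]; simp

lemma key_prod (p : ℕ) [Fact p.Prime] (a k : ℕ) (ha : a < p) (hk : k < p) :
    ∏ m ∈ (Finset.range p).erase k, ((a : ZMod p) - (m : ZMod p))
      = if a = k then -1 else 0 := by
  have cast_inj : ∀ m n : ℕ, m < p → n < p → (m : ZMod p) = n → m = n := by
    intro m n hm hn h
    have := congrArg ZMod.val h
    rwa [ZMod.val_cast_of_lt hm, ZMod.val_cast_of_lt hn] at this
  split_ifs with hak
  · subst hak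
    rw [← prod_nonzero_zmod p]
    refine Finset.prod_bij (fun m _ => (a : ZMod p) - (m : ZMod p)) ?_ ?_ ?_ ?_
    · intro m hm
      simp only [Finset.mem_erase, Finset.mem_range] at hm
      simp only [Finset.mem_erase, Finset.mem_univ, and_true]
      exact sub_ne_zero.mpr fun h => hm.1 (cast_inj m a hm.2 ha h.symm)
    · intro m hm n hn h
      simp only [Finset.mem_erase, Finset.mem_range] at hm hn
      have : (m : ZMod p) = n := by linear_combination -h
      exact cast_inj m n hm.2 hn.2 this
    · intro x hx
      simp only [Finset.mem_erase, Finset.mem_univ, and_true] at hx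
      refine ⟨((a : ZMod p) - x).val, ?_, ?_⟩
      · simp only [Finset.mem_erase, Finset.mem_range]
        constructor
        · intro h
          apply hx
          have : ((((a : ZMod p) - x).val : ℕ) : ZMod p) = (a : ZMod p) - x := by
            rw [ZMod.natCast_val, ZMod.cast_id]
          rw [h] at this
          linear_combination this
        · exact ZMod.val_lt _
      · show (a : ZMod p) - (((a : ZMod p) - x).val : ℕ) = x
        rw [ZMod.natCast_val, ZMod.cast_id]; ring
    · intros; rfl
  · apply Finset.prod_eq_zero (i := a)
    · simp [Finset.mem_erase, Finset.mem_range, hak, ha]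
    · simp

/-- the Lagrange-interpolation expression
`f(a,b) = Σ_{k=1}^{p-1} Σ_{j=p-k}^{p-1} (Π_{m≠k}(a-m))·(Π_{m≠j}(b-m))`
is the indicator (in `ℤ_p`) of the carry condition `a + b ≥ p`. -/
theorem carry_polynomial_identity (p : ℕ) (hp : p.Prime) (a b : ℕ)
    (ha : a < p) (hb : b < p) :
    (∑ k ∈ Finset.Icc 1 (p - 1), ∑ j ∈ Finset.Icc (p - k) (p - 1),
        (∏ m ∈ (Finset.range p).erase k, ((a : ZMod p) - (m : ZMod p))) *
          (∏ m ∈ (Finset.range p).erase j, ((b : ZMod p) - (m : ZMod p))))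
      = if p ≤ a + b then 1 else 0 := by
  haveI : Fact p.Prime := ⟨hp⟩
  have hp2 : 2 ≤ p := hp.two_le
  have hsum : ∀ k ∈ Finset.Icc 1 (p - 1),
      (∑ j ∈ Finset.Icc (p - k) (p - 1),
        (∏ m ∈ (Finset.range p).erase k, ((a : ZMod p) - (m : ZMod p))) *
          (∏ m ∈ (Finset.range p).erase j, ((b : ZMod p) - (m : ZMod p))))
      = if a = k then (if b ∈ Finset.Icc (p - k) (p - 1) then (1 : ZMod p) else 0) else 0 := by
    intro k hk
    rw [Finset.mem_Icc] at hk
    have hkp : k < p := by omega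
    rw [key_prod p a k ha hkp]
    have : ∀ j ∈ Finset.Icc (p - k) (p - 1),
        (if a = k then (-1 : ZMod p) else 0) *
          (∏ m ∈ (Finset.range p).erase j, ((b : ZMod p) - (m : ZMod p)))
        = (if a = k then (-1 : ZMod p) else 0) * (if b = j then -1 else 0) := by
      intro j hj
      rw [Finset.mem_Icc] at hj
      rw [key_prod p b j hb (by omega)]
    rw [Finset.sum_congr rfl this, ← Finset.mul_sum, Finset.sum_ite_eq]
    split_ifs <;> ring
  rw [Finset.sum_congr rfl hsum, Finset.sum_ite_eq]
  simp only [Finset.mem_Icc]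
  split_ifs <;> first | rfl | (exfalso; omega)
end
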